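/- arXiv:math/0310184 — 3 statements merged into one kernel-verified Lean document; each statement's English description precedes it below -/
import Mathlib

section
/- Let ψ ∈ C^∞(ℝⁿ × ℝ) with 0 ≤ ψ ≤ 1, ψ(ξ,τ) = 0 whenever ‖ξ,τ‖ ≤ 1 and ψ(ξ,τ) = 1 whenever ‖ξ,τ‖ ≥ 2, and for ε > 0 set c_ε(ξ,τ) = ψ(εξ, ε^w τ) for (ξ,τ) ∈ ℝⁿ × ℝ. Let q_{m−j} ∈ S_{v,m−j}(U×ℝ^{n+1}) (so that c_ε·q_{m−j} extends by 0 to a smooth function on U × ℝⁿ × ℝ, since c_ε vanishes for ‖ξ,τ‖ ≤ 1/ε). Then for every compact K ⊂ U, all multi-orders α, β ∈ ℕⁿ and every integer k ≥ 0 there is a constant C > 0, independent of ε, such that for all 0 < ε ≤ 1: |∂_x^α ∂_ξ^β ∂_τ^k [c_ε(ξ,τ)·q_{m−j}(x,ξ,τ)]| ≤ C·ε·(1+‖ξ,τ‖)^{m+1−j−|β|−wk} for all x ∈ K and (ξ,τ) ∈ ℝⁿ × ℝ. -/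
noncomputable section

/-- `ℝⁿ` with the Euclidean norm. -/
abbrev En (n : ℕ) : Type := EuclideanSpace ℝ (Fin n)

/-- The total space `ℝⁿ_x × ℝⁿ_ξ × ℂ_τ`. -/
abbrev Pn (n : ℕ) : Type := En n × En n × ℂ

/-- The total space `ℝⁿ_x × ℝⁿ_ξ × ℝ_τ` (real time covariable). -/
abbrev Rn (n : ℕ) : Type := En n × En n × ℝ

/-- The parabolic pseudo-norm `‖ξ,τ‖ = (|ξ|^w + |τ|)^{1/w}`. -/
def pnorm (n w : ℕ) (ξ : En n) (τ : ℂ) : ℝ :=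
  (‖ξ‖ ^ w + ‖τ‖) ^ ((w : ℝ)⁻¹)

/-- Directional (line) derivative along the vector `v`. -/
def pd {V : Type*} [NormedAddCommGroup V] [NormedSpace ℝ V] (v : V) (f : V → ℂ) : V → ℂ :=
  fun p => lineDeriv ℝ f p v

/-- The multi-index partial derivative `∂_x^α` in the first (space) variable. -/
def DxR (n : ℕ) (α : Fin n → ℕ) (f : Rn n → ℂ) : Rn n → ℂ :=
  (List.finRange n).foldr
    (fun i g => (pd ((EuclideanSpace.single i (1 : ℝ) : En n), (0 : En n), (0 : ℝ)))^[α i] g) f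

/-- The multi-index partial derivative `∂_ξ^β` in the second (covariable) variable. -/
def DxiR (n : ℕ) (β : Fin n → ℕ) (f : Rn n → ℂ) : Rn n → ℂ :=
  (List.finRange n).foldr
    (fun i g => (pd ((0 : En n), (EuclideanSpace.single i (1 : ℝ) : En n), (0 : ℝ)))^[β i] g) f

/-- The iterated real partial derivative `∂_τ^k` in the (real) time covariable. -/
def DtR (n : ℕ) (k : ℕ) (f : Rn n → ℂ) : Rn n → ℂ :=
  (pd ((0 : En n), (0 : En n), (1 : ℝ)))^[k] f

/-- `∂_x^α ∂_ξ^β ∂_τ^k` (real time covariable). -/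
def DR (n : ℕ) (α β : Fin n → ℕ) (k : ℕ) (f : Rn n → ℂ) : Rn n → ℂ :=
  DxR n α (DxiR n β (DtR n k f))

/-- The class `S_{v,m'}(U×ℝ^{n+1})` of homogeneous Volterra symbols of degree `m'`:
smooth on `U × ((ℝⁿ × cl C₋) ∖ {0})`, holomorphic in `τ ∈ C₋ = {Im τ < 0}` for fixed `(x,ξ)`,
and (anisotropically) homogeneous of degree `m'`. -/
def HomSym (n w : ℕ) (U : Set (En n)) (m' : ℤ) (q : Pn n → ℂ) : Prop :=
  ContDiffOn ℝ (⊤ : ℕ∞) q {p : Pn n | p.1 ∈ U ∧ p.2.2.im ≤ 0 ∧ p.2 ≠ 0}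
    ∧ (∀ x ∈ U, ∀ ξ : En n,
        DifferentiableOn ℂ (fun τ => q (x, ξ, τ)) {τ : ℂ | τ.im < 0})
    ∧ ∀ x ∈ U, ∀ (ξ : En n) (τ : ℂ), τ.im ≤ 0 → (ξ, τ) ≠ 0 → ∀ l : ℝ, 0 < l →
        q (x, l • ξ, (l ^ w : ℝ) • τ) = (l : ℂ) ^ m' * q (x, ξ, τ)

/-! ### Auxiliary development -/

/-- The anisotropic scaling map. -/
def Ac (n w : ℕ) (c : ℝ) : Rn n → Rn n := fun p => (p.1, c • p.2.1, c ^ w * p.2.2)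

lemma Ac_add_smul (n w : ℕ) (c : ℝ) (p v : Rn n) (s : ℝ) :
    Ac n w c (p + s • v) = Ac n w c p + s • Ac n w c v := by
  simp only [Ac, Prod.fst_add, Prod.snd_add, Prod.smul_fst, Prod.smul_snd, Prod.mk_add_mk,
    Prod.smul_mk, smul_add, smul_smul, mul_comm c s, smul_eq_mul]
  refine Prod.ext rfl (Prod.ext rfl ?_)
  simp only [smul_eq_mul]
  ring

lemma aux_lineDeriv_comp (n w : ℕ) (c : ℝ) (f : Rn n → ℂ) (p v : Rn n) :
    lineDeriv ℝ (fun x => f (Ac n w c x)) p v = lineDeriv ℝ f (Ac n w c p) (Ac n w c v) := by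
  unfold lineDeriv
  have h : (fun t : ℝ => f (Ac n w c (p + t • v)))
      = fun t : ℝ => f (Ac n w c p + t • Ac n w c v) := by
    funext t; rw [Ac_add_smul]
  rw [h]

lemma aux_pd_const_mul (n : ℕ) (γ : ℂ) (v : Rn n) (f : Rn n → ℂ) :
    pd v (fun p => γ * f p) = fun p => γ * pd v f p := by
  funext p
  unfold pd lineDeriv
  exact deriv_const_mul_field γ

lemma aux_pd_comp_x (n w : ℕ) (c : ℝ) (e : En n) (f : Rn n → ℂ) :
    pd ((e, (0 : En n), (0 : ℝ))) (fun x => f (Ac n w c x))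
      = fun p => pd (e, (0 : En n), (0 : ℝ)) f (Ac n w c p) := by
  funext p
  unfold pd
  rw [aux_lineDeriv_comp]
  congr 1
  simp [Ac]

lemma aux_pd_comp_xi (n w : ℕ) (c : ℝ) (e : En n) (f : Rn n → ℂ) :
    pd (((0 : En n), e, (0 : ℝ))) (fun x => f (Ac n w c x))
      = fun p => (c : ℂ) * pd ((0 : En n), e, (0 : ℝ)) f (Ac n w c p) := by
  funext p
  unfold pd
  rw [aux_lineDeriv_comp]
  have h : Ac n w c ((0 : En n), e, (0 : ℝ)) = c • ((0 : En n), e, (0 : ℝ)) := by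
    simp [Ac, Prod.smul_mk]
  rw [h, lineDeriv_smul, Complex.real_smul]

lemma aux_pd_comp_t (n w : ℕ) (c : ℝ) (f : Rn n → ℂ) :
    pd (((0 : En n), (0 : En n), (1 : ℝ))) (fun x => f (Ac n w c x))
      = fun p => ((c ^ w : ℝ) : ℂ) * pd ((0 : En n), (0 : En n), (1 : ℝ)) f (Ac n w c p) := by
  funext p
  unfold pd
  rw [aux_lineDeriv_comp]
  have h : Ac n w c ((0 : En n), (0 : En n), (1 : ℝ))
      = (c ^ w) • ((0 : En n), (0 : En n), (1 : ℝ)) := by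
    simp [Ac, Prod.smul_mk]
  rw [h, lineDeriv_smul, Complex.real_smul]

lemma aux_iter_const_mul (n : ℕ) (v : Rn n) (γ : ℂ) (N : ℕ) :
    ∀ f : Rn n → ℂ, (pd v)^[N] (fun p => γ * f p) = fun p => γ * (pd v)^[N] f p := by
  induction N with
  | zero => intro f; simp
  | succ N ih =>
      intro f
      rw [Function.iterate_succ_apply, Function.iterate_succ_apply, aux_pd_const_mul]
      exact ih _

lemma aux_iter_comp (n w : ℕ) (c : ℝ) (v : Rn n) (cf : ℝ)
    (h : ∀ g : Rn n → ℂ, pd v (fun x => g (Ac n w c x))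
      = fun p => (cf : ℂ) * pd v g (Ac n w c p)) (N : ℕ) :
    ∀ f : Rn n → ℂ, (pd v)^[N] (fun x => f (Ac n w c x))
      = fun p => ((cf : ℂ)) ^ N * (pd v)^[N] f (Ac n w c p) := by
  induction N with
  | zero => intro f; simp
  | succ N ih =>
      intro f
      rw [Function.iterate_succ_apply, Function.iterate_succ_apply, h]
      have h2 := aux_iter_const_mul n v (cf : ℂ) N (fun x => (pd v f) (Ac n w c x))
      rw [h2, ih (pd v f)]
      funext p
      ring

/-- Generic fold used by `DxR`, `DxiR`. -/
def Dfold (n : ℕ) (dir : Fin n → Rn n) (μ : Fin n → ℕ) (L : List (Fin n)) (f : Rn n → ℂ) :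
    Rn n → ℂ :=
  L.foldr (fun i g => (pd (dir i))^[μ i] g) f

lemma Dfold_const_mul (n : ℕ) (dir : Fin n → Rn n) (μ : Fin n → ℕ) (L : List (Fin n)) (γ : ℂ) :
    ∀ f : Rn n → ℂ, Dfold n dir μ L (fun p => γ * f p) = fun p => γ * Dfold n dir μ L f p := by
  induction L with
  | nil => intro f; rfl
  | cons i L ih =>
      intro f
      show (pd (dir i))^[μ i] (Dfold n dir μ L (fun p => γ * f p)) = _
      rw [ih f, aux_iter_const_mul]
      rfl

lemma Dfold_comp (n w : ℕ) (c : ℝ) (dir : Fin n → Rn n) (μ : Fin n → ℕ) (cf : ℝ)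
    (h : ∀ i, ∀ g : Rn n → ℂ, pd (dir i) (fun x => g (Ac n w c x))
      = fun p => (cf : ℂ) * pd (dir i) g (Ac n w c p)) (L : List (Fin n)) :
    ∀ f : Rn n → ℂ, Dfold n dir μ L (fun x => f (Ac n w c x))
      = fun p => ((cf : ℂ)) ^ ((L.map μ).sum) * Dfold n dir μ L f (Ac n w c p) := by
  induction L with
  | nil => intro f; funext p; simp [Dfold]
  | cons i L ih =>
      intro f
      show (pd (dir i))^[μ i] (Dfold n dir μ L (fun x => f (Ac n w c x))) = _
      rw [ih f, aux_iter_const_mul, aux_iter_comp n w c (dir i) cf (h i) (μ i)]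
      funext p
      show (cf : ℂ) ^ ((L.map μ).sum) * ((cf : ℂ) ^ (μ i) * _) = _
      rw [List.map_cons, List.sum_cons, pow_add]
      show _ = (cf : ℂ) ^ (μ i) * (cf : ℂ) ^ ((L.map μ).sum)
      * (pd (dir i))^[μ i] (Dfold n dir μ L f) (Ac n w c p)
      ring

lemma aux_pd_congr (n : ℕ) {O : Set (Rn n)} (hO : IsOpen O) (v : Rn n) {f g : Rn n → ℂ}
    (h : Set.EqOn f g O) : Set.EqOn (pd v f) (pd v g) O := by
  intro p hp
  exact Filter.EventuallyEq.lineDeriv_eq (Filter.eventuallyEq_of_mem (hO.mem_nhds hp) h)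

lemma aux_iter_congr (n : ℕ) {O : Set (Rn n)} (hO : IsOpen O) (v : Rn n) (N : ℕ) :
    ∀ {f g : Rn n → ℂ}, Set.EqOn f g O → Set.EqOn ((pd v)^[N] f) ((pd v)^[N] g) O := by
  induction N with
  | zero => intro f g h; exact h
  | succ N ih =>
      intro f g h
      rw [Function.iterate_succ_apply, Function.iterate_succ_apply]
      exact ih (aux_pd_congr n hO v h)

lemma Dfold_congr (n : ℕ) {O : Set (Rn n)} (hO : IsOpen O) (dir : Fin n → Rn n)
    (μ : Fin n → ℕ) (L : List (Fin n)) :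
    ∀ {f g : Rn n → ℂ}, Set.EqOn f g O → Set.EqOn (Dfold n dir μ L f) (Dfold n dir μ L g) O := by
  induction L with
  | nil => intro f g h; exact h
  | cons i L ih =>
      intro f g h
      exact aux_iter_congr n hO (dir i) (μ i) (ih h)

lemma aux_pd_smooth (n : ℕ) {O : Set (Rn n)} (hO : IsOpen O) (v : Rn n) {f : Rn n → ℂ}
    (hf : ContDiffOn ℝ (⊤ : ℕ∞) f O) : ContDiffOn ℝ (⊤ : ℕ∞) (pd v f) O := by
  have h1 : ContDiffOn ℝ (⊤ : ℕ∞) (fun p => fderiv ℝ f p v) O :=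
    (hf.fderiv_of_isOpen hO (by exact_mod_cast le_top)).clm_apply contDiffOn_const
  refine h1.congr (fun p hp => ?_)
  exact ((hf.contDiffAt (hO.mem_nhds hp)).differentiableAt (by simp)).lineDeriv_eq_fderiv

lemma aux_iter_smooth (n : ℕ) {O : Set (Rn n)} (hO : IsOpen O) (v : Rn n) (N : ℕ) :
    ∀ {f : Rn n → ℂ}, ContDiffOn ℝ (⊤ : ℕ∞) f O → ContDiffOn ℝ (⊤ : ℕ∞) ((pd v)^[N] f) O := by
  induction N with
  | zero => intro f hf; exact hf
  | succ N ih =>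
      intro f hf
      rw [Function.iterate_succ_apply]
      exact ih (aux_pd_smooth n hO v hf)

lemma Dfold_smooth (n : ℕ) {O : Set (Rn n)} (hO : IsOpen O) (dir : Fin n → Rn n)
    (μ : Fin n → ℕ) (L : List (Fin n)) :
    ∀ {f : Rn n → ℂ}, ContDiffOn ℝ (⊤ : ℕ∞) f O → ContDiffOn ℝ (⊤ : ℕ∞) (Dfold n dir μ L f) O := by
  induction L with
  | nil => intro f hf; exact hf
  | cons i L ih =>
      intro f hf
      exact aux_iter_smooth n hO (dir i) (μ i) (ih hf)

/-! Identification of `DR` with `Dfold` compositions, and the main `DR` lemmas. -/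

lemma DxR_eq (n : ℕ) (α : Fin n → ℕ) (f : Rn n → ℂ) :
    DxR n α f = Dfold n (fun i => ((EuclideanSpace.single i (1 : ℝ) : En n), (0 : En n), (0 : ℝ)))
      α (List.finRange n) f := rfl

lemma DxiR_eq (n : ℕ) (β : Fin n → ℕ) (f : Rn n → ℂ) :
    DxiR n β f = Dfold n (fun i => ((0 : En n), (EuclideanSpace.single i (1 : ℝ) : En n), (0 : ℝ)))
      β (List.finRange n) f := rfl

lemma DR_const_mul (n : ℕ) (α β : Fin n → ℕ) (k : ℕ) (γ : ℂ) (f : Rn n → ℂ) :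
    DR n α β k (fun p => γ * f p) = fun p => γ * DR n α β k f p := by
  unfold DR DtR
  rw [aux_iter_const_mul]
  rw [DxiR_eq, DxiR_eq, Dfold_const_mul]
  rw [DxR_eq, DxR_eq, Dfold_const_mul]

lemma DR_congr (n : ℕ) {O : Set (Rn n)} (hO : IsOpen O) (α β : Fin n → ℕ) (k : ℕ)
    {f g : Rn n → ℂ} (h : Set.EqOn f g O) :
    Set.EqOn (DR n α β k f) (DR n α β k g) O := by
  unfold DR DtR
  rw [DxiR_eq, DxiR_eq, DxR_eq, DxR_eq]
  exact Dfold_congr n hO _ _ _ (Dfold_congr n hO _ _ _ (aux_iter_congr n hO _ k h))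

lemma DR_smooth (n : ℕ) {O : Set (Rn n)} (hO : IsOpen O) (α β : Fin n → ℕ) (k : ℕ)
    {f : Rn n → ℂ} (hf : ContDiffOn ℝ (⊤ : ℕ∞) f O) :
    ContDiffOn ℝ (⊤ : ℕ∞) (DR n α β k f) O := by
  unfold DR DtR
  rw [DxiR_eq, DxR_eq]
  exact Dfold_smooth n hO _ _ _ (Dfold_smooth n hO _ _ _ (aux_iter_smooth n hO _ k hf))

lemma DR_zero (n : ℕ) (α β : Fin n → ℕ) (k : ℕ) :
    DR n α β k (fun _ => (0 : ℂ)) = fun _ => (0 : ℂ) := by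
  have h : (fun _ : Rn n => (0 : ℂ)) = fun p => (0 : ℂ) * ((fun _ : Rn n => (1:ℂ)) p) := by
    funext p; ring
  rw [h, DR_const_mul]
  funext p; simp

lemma DR_comp (n w : ℕ) (c : ℝ) (α β : Fin n → ℕ) (k : ℕ) (f : Rn n → ℂ) :
    DR n α β k (fun x => f (Ac n w c x))
      = fun p => (c : ℂ) ^ (∑ i, β i) * ((c ^ w : ℝ) : ℂ) ^ k
          * DR n α β k f (Ac n w c p) := by
  unfold DR DtR
  rw [aux_iter_comp n w c _ (c ^ w) (fun g => aux_pd_comp_t n w c g) k]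
  rw [DxiR_eq, DxiR_eq]
  rw [Dfold_const_mul]
  rw [Dfold_comp n w c _ β c (fun i g => aux_pd_comp_xi n w c (EuclideanSpace.single i 1) g)]
  rw [DxR_eq, DxR_eq]
  rw [Dfold_const_mul, Dfold_const_mul]
  rw [Dfold_comp n w c _ α 1 (fun i g => by
    simpa using aux_pd_comp_x n w c (EuclideanSpace.single i 1) g)]
  funext p
  simp only [Complex.ofReal_one, one_pow, one_mul]
  rw [Fin.sum_univ_def]
  ring

lemma pnorm_nonneg' (n w : ℕ) (ξ : En n) (τ : ℂ) : 0 ≤ pnorm n w ξ τ :=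
  Real.rpow_nonneg (by positivity) _

lemma pnorm_zero' (n w : ℕ) (hw : w ≠ 0) : pnorm n w 0 ((0 : ℝ) : ℂ) = 0 := by
  unfold pnorm
  simp [zero_pow hw, Real.zero_rpow (by positivity : ((w:ℝ))⁻¹ ≠ 0)]

lemma pnorm_real (n w : ℕ) (ξ : En n) (t : ℝ) :
    pnorm n w ξ (t : ℂ) = (‖ξ‖ ^ w + |t|) ^ ((w : ℝ)⁻¹) := by
  unfold pnorm
  rw [Complex.norm_real, Real.norm_eq_abs]

lemma pnorm_smul' (n w : ℕ) (hw : w ≠ 0) (c : ℝ) (hc : 0 ≤ c) (ξ : En n) (t : ℝ) :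
    pnorm n w (c • ξ) ((c ^ w * t : ℝ) : ℂ) = c * pnorm n w ξ (t : ℂ) := by
  rw [pnorm_real, pnorm_real]
  have h1 : ‖c • ξ‖ = c * ‖ξ‖ := by
    rw [norm_smul, Real.norm_eq_abs, abs_of_nonneg hc]
  have h2 : |c ^ w * t| = c ^ w * |t| := by
    rw [abs_mul, abs_of_nonneg (pow_nonneg hc w)]
  rw [h1, h2, mul_pow]
  have h3 : c ^ w * ‖ξ‖ ^ w + c ^ w * |t| = c ^ w * (‖ξ‖ ^ w + |t|) := by ring
  rw [h3, Real.mul_rpow (pow_nonneg hc w) (by positivity)]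
  congr 1
  rw [← Real.rpow_natCast c w, ← Real.rpow_mul hc]
  rw [mul_inv_cancel₀ (by exact_mod_cast hw : (w : ℝ) ≠ 0), Real.rpow_one]

lemma pnorm_pos_ne (n w : ℕ) (hw : w ≠ 0) {z : En n × ℝ} (h : 0 < pnorm n w z.1 (z.2 : ℂ)) :
    ¬(z.1 = 0 ∧ z.2 = 0) := by
  rintro ⟨h1, h2⟩
  rw [show z = ((0 : En n), (0 : ℝ)) from Prod.ext h1 h2] at h
  rw [pnorm_zero' n w hw] at h
  exact lt_irrefl 0 h

lemma pnorm_cont (n w : ℕ) (hw : w ≠ 0) :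
    Continuous (fun z : En n × ℝ => pnorm n w z.1 (z.2 : ℂ)) := by
  have h : (fun z : En n × ℝ => pnorm n w z.1 (z.2 : ℂ))
      = fun z : En n × ℝ => (‖z.1‖ ^ w + |z.2|) ^ ((w : ℝ)⁻¹) := by
    funext z; rw [pnorm_real]
  rw [h]
  have hbase : Continuous (fun z : En n × ℝ => ‖z.1‖ ^ w + |z.2|) :=
    ((continuous_fst.norm.pow w)).add (continuous_snd.abs)
  rw [continuous_iff_continuousAt]
  intro z
  exact (Real.continuousAt_rpow_const _ _ (Or.inr (by positivity))).comp hbase.continuousAt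

lemma pnorm_base_le (n w : ℕ) (hw : w ≠ 0) {z : En n × ℝ} {R : ℝ} (hR : 0 ≤ R)
    (h : pnorm n w z.1 (z.2 : ℂ) ≤ R) : ‖z.1‖ ^ w + |z.2| ≤ R ^ w := by
  have h0 : (0:ℝ) ≤ ‖z.1‖ ^ w + |z.2| := by positivity
  have hkey : ((‖z.1‖ ^ w + |z.2|) ^ ((w : ℝ)⁻¹)) ^ w = ‖z.1‖ ^ w + |z.2| :=
    Real.rpow_inv_natCast_pow h0 hw
  rw [pnorm_real] at h
  calc ‖z.1‖ ^ w + |z.2| = ((‖z.1‖ ^ w + |z.2|) ^ ((w : ℝ)⁻¹)) ^ w := hkey.symm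
    _ ≤ R ^ w := pow_le_pow_left₀ (Real.rpow_nonneg h0 _) h w

lemma pnorm_ball_compact (n w : ℕ) (hw : w ≠ 0) (R : ℝ) (hR : 1 ≤ R) :
    IsCompact {z : En n × ℝ | pnorm n w z.1 (z.2 : ℂ) ≤ R} := by
  rw [Metric.isCompact_iff_isClosed_bounded]
  constructor
  · exact isClosed_le (pnorm_cont n w hw) continuous_const
  · rw [isBounded_iff_forall_norm_le]
    refine ⟨R ^ w, fun z hz => ?_⟩
    have hb := pnorm_base_le n w hw (by linarith) hz
    have h1 : ‖z.1‖ ^ w ≤ R ^ w := by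
      have : (0:ℝ) ≤ |z.2| := abs_nonneg _
      linarith
    have h2 : |z.2| ≤ R ^ w := by
      have : (0:ℝ) ≤ ‖z.1‖ ^ w := by positivity
      linarith
    have h3 : ‖z.1‖ ≤ R := by
      by_contra hcon
      push_neg at hcon
      have : R ^ w < ‖z.1‖ ^ w := by
        apply pow_lt_pow_left₀ hcon (by linarith) hw
      linarith
    have h4 : R ≤ R ^ w := le_self_pow₀ hR hw
    rw [Prod.norm_def]
    exact max_le (h3.trans h4) (by rwa [Real.norm_eq_abs])

lemma aux_zpow_bound {a b R : ℝ} (e : ℤ) (ha : 1 ≤ a) (hab : a ≤ b) (hba : b ≤ R * a)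
    (hR : 1 ≤ R) : a ^ e ≤ R ^ |e| * b ^ e := by
  have ha0 : (0:ℝ) < a := lt_of_lt_of_le one_pos ha
  have hb0 : (0:ℝ) < b := ha0.trans_le hab
  have hR0 : (0:ℝ) < R := lt_of_lt_of_le one_pos hR
  rcases le_or_gt 0 e with he | he
  · obtain ⟨N, rfl⟩ := Int.eq_ofNat_of_zero_le he
    rw [abs_of_nonneg he]
    rw [zpow_natCast, zpow_natCast, zpow_natCast]
    calc a ^ N ≤ b ^ N := pow_le_pow_left₀ ha0.le hab N
      _ ≤ R ^ N * b ^ N := le_mul_of_one_le_left (by positivity) (one_le_pow₀ hR)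
  · obtain ⟨N, hN⟩ : ∃ N : ℕ, e = -(N : ℤ) := ⟨(-e).toNat, by omega⟩
    subst hN
    rw [abs_of_nonpos (by omega), neg_neg]
    rw [zpow_neg, zpow_neg, zpow_natCast, zpow_natCast, zpow_natCast]
    have h1 : b ^ N ≤ (R * a) ^ N := pow_le_pow_left₀ hb0.le hba N
    have h2 : (a ^ N)⁻¹ = R ^ N * ((R * a) ^ N)⁻¹ := by
      rw [mul_pow]
      field_simp
    rw [h2]
    apply mul_le_mul_of_nonneg_left _ (by positivity)
    exact inv_anti₀ (by positivity) h1

set_option maxHeartbeats 2000000 in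
/-- Cut-off estimates: with `ψ ∈ C^∞(ℝⁿ×ℝ)`, `0 ≤ ψ ≤ 1`, `ψ = 0` for `‖ξ,τ‖ ≤ 1`, `ψ = 1`
for `‖ξ,τ‖ ≥ 2`, and `c_ε(ξ,τ) = ψ(εξ, ε^w τ)`, for any `q_{m−j} ∈ S_{v,m−j}(U×ℝ^{n+1})`
and any compact `K ⊂ U`, `α`, `β`, `k` there is `C > 0`, independent of `ε`, with
`|∂_x^α ∂_ξ^β ∂_τ^k [c_ε·q_{m−j}]| ≤ C·ε·(1+‖ξ,τ‖)^{m+1−j−|β|−wk}` for all `0 < ε ≤ 1`,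
`x ∈ K` and `(ξ,τ) ∈ ℝⁿ × ℝ`. -/
theorem stmt10 (n w : ℕ) (hn : 1 ≤ n) (hw : Even w) (hw2 : 2 ≤ w)
    (U : Set (En n)) (hU : IsOpen U) (m : ℤ) (j : ℕ)
    (ψ : En n × ℝ → ℝ) (hψ : ContDiff ℝ (⊤ : ℕ∞) ψ)
    (hψ01 : ∀ p : En n × ℝ, 0 ≤ ψ p ∧ ψ p ≤ 1)
    (hψ0 : ∀ p : En n × ℝ, pnorm n w p.1 (p.2 : ℂ) ≤ 1 → ψ p = 0)
    (hψ1 : ∀ p : En n × ℝ, 2 ≤ pnorm n w p.1 (p.2 : ℂ) → ψ p = 1)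
    (q : Pn n → ℂ) (hq : HomSym n w U (m - (j : ℤ)) q)
    (K : Set (En n)) (hK : IsCompact K) (hKU : K ⊆ U)
    (α β : Fin n → ℕ) (k : ℕ) :
    ∃ C > (0 : ℝ), ∀ ε : ℝ, 0 < ε → ε ≤ 1 → ∀ x ∈ K, ∀ (ξ : En n) (t : ℝ),
      ‖(DR n α β k
            (fun p => ((ψ (ε • p.2.1, ε ^ w * p.2.2) : ℝ) : ℂ) * q (p.1, p.2.1, (p.2.2 : ℂ)))
            (x, ξ, t))‖
        ≤ C * ε * (1 + pnorm n w ξ (t : ℂ))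
            ^ (m + 1 - (j : ℤ) - (∑ i, (β i : ℤ)) - (w : ℤ) * (k : ℤ)) := by
  have hw0 : w ≠ 0 := by omega
  have hwR : ((w:ℝ)) ≠ 0 := by exact_mod_cast hw0
  set d : ℤ := m - j - (∑ i, β i) - w * k with hd
  have hexp : m + 1 - (j:ℤ) - (∑ i, (β i : ℤ)) - (w:ℤ) * k = d + 1 := by
    rw [hd]; push_cast; ring
  set O : Set (Rn n) := {p : Rn n | p.1 ∈ U} with hO
  have hOopen : IsOpen O := hU.preimage continuous_fst
  -- the frozen (ε = 1) function
  set F : Rn n → ℂ := fun p => ((ψ p.2 : ℝ) : ℂ) * q (p.1, p.2.1, (p.2.2 : ℂ)) with hF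
  -- smoothness of F on O
  have hemb : ContDiff ℝ (⊤:ℕ∞) (fun p : Rn n => ((p.1, p.2.1, (p.2.2:ℂ)) : Pn n)) :=
    contDiff_fst.prodMk ((contDiff_fst.comp contDiff_snd).prodMk
      (Complex.ofRealCLM.contDiff.comp (contDiff_snd.comp contDiff_snd)))
  set O' : Set (Rn n) := {p : Rn n | p.1 ∈ U ∧ p.2 ≠ 0} with hO'
  have hO'open : IsOpen O' := by
    have h2 : IsClosed {p : Rn n | p.2 = (0 : En n × ℝ)} :=
      isClosed_eq continuous_snd continuous_const
    have : O' = {p : Rn n | p.1 ∈ U} ∩ {p : Rn n | p.2 = (0 : En n × ℝ)}ᶜ := by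
      ext p; simp [hO']
    rw [this]
    exact (hU.preimage continuous_fst).inter h2.isOpen_compl
  have hqsm : ContDiffOn ℝ (⊤:ℕ∞) (fun p : Rn n => q (p.1, p.2.1, (p.2.2:ℂ))) O' := by
    refine hq.1.comp hemb.contDiffOn (fun p hp => ?_)
    refine ⟨hp.1, by simp, fun hzero => ?_⟩
    simp only [Prod.mk_eq_zero, Complex.ofReal_eq_zero] at hzero
    exact hp.2 (Prod.ext hzero.1 hzero.2)
  have hψsmC : ContDiff ℝ (⊤:ℕ∞) (fun p : Rn n => ((ψ p.2 : ℝ):ℂ)) :=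
    Complex.ofRealCLM.contDiff.comp (hψ.comp contDiff_snd)
  have hFO' : ContDiffOn ℝ (⊤:ℕ∞) F O' := hψsmC.contDiffOn.mul hqsm
  set V1 : Set (Rn n) := {p : Rn n | pnorm n w p.2.1 (p.2.2 : ℂ) < 1} with hV1
  have hV1open : IsOpen V1 := by
    have hc : Continuous (fun p : Rn n => pnorm n w p.2.1 (p.2.2 : ℂ)) :=
      (pnorm_cont n w hw0).comp continuous_snd
    exact isOpen_lt hc continuous_const
  have hFV1 : Set.EqOn F (fun _ => (0:ℂ)) V1 := by
    intro p hp
    have h0 : ψ p.2 = 0 := hψ0 p.2 (le_of_lt hp)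
    simp only [hF, h0, Complex.ofReal_zero, zero_mul]
  have hFsm : ContDiffOn ℝ (⊤:ℕ∞) F O := by
    intro p hp
    by_cases hcase : pnorm n w p.2.1 (p.2.2 : ℂ) < 1
    · have hev : F =ᶠ[nhds p] (fun _ => (0:ℂ)) :=
        Filter.eventuallyEq_of_mem (hV1open.mem_nhds hcase) hFV1
      exact ((contDiffAt_const (c := (0:ℂ))).congr_of_eventuallyEq hev).contDiffWithinAt
    · have hne : p.2 ≠ 0 := by
        intro h0
        apply hcase
        have h1 : p.2.1 = (0 : En n) := by rw [h0]; rfl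
        have h2 : p.2.2 = (0 : ℝ) := by rw [h0]; rfl
        rw [h1, h2, pnorm_zero' n w hw0]
        norm_num
      exact (hFO'.contDiffAt (hO'open.mem_nhds ⟨hp, hne⟩)).contDiffWithinAt
  set G : Rn n → ℂ := DR n α β k F with hG
  have hGsm : ContDiffOn ℝ (⊤:ℕ∞) G O := DR_smooth n hOopen α β k hFsm
  have hGzero : ∀ p : Rn n, pnorm n w p.2.1 (p.2.2 : ℂ) < 1 → G p = 0 := by
    intro p hp
    have h := DR_congr n hV1open α β k hFV1 hp
    rw [hG]
    rw [show (DR n α β k F) p = DR n α β k (fun _ => (0:ℂ)) p from h, DR_zero]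
  -- bound on a compact shell
  have hT := pnorm_ball_compact n w hw0 3 (by norm_num)
  have hsub : K ×ˢ {z : En n × ℝ | pnorm n w z.1 (z.2:ℂ) ≤ 3} ⊆ O := fun p hp => hKU hp.1
  obtain ⟨M, hM⟩ := (hK.prod hT).exists_bound_of_continuousOn (hGsm.continuousOn.mono hsub)
  set M1 : ℝ := max M 1 with hM1
  have hM1pos : (0:ℝ) < M1 := lt_of_lt_of_le one_pos (le_max_right _ _)
  have hMbound : ∀ p : Rn n, p.1 ∈ K → pnorm n w p.2.1 (p.2.2:ℂ) ≤ 3 →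
      ‖G p‖ ≤ M1 := by
    intro p h1 h2
    have h3 := hM p ⟨h1, h2⟩
    exact h3.trans (le_max_left _ _)
  -- homogeneity of the derivative
  have hkey : ∀ l : ℝ, 1 ≤ l → ∀ p : Rn n, p.1 ∈ U → 2 < pnorm n w p.2.1 (p.2.2:ℂ) →
      l ^ ((∑ i, β i) + w * k) * ‖G (Ac n w l p)‖
        = l ^ ((m:ℤ) - j) * ‖G p‖ := by
    intro l hl p hpU hp2
    have hl0 : (0:ℝ) < l := lt_of_lt_of_le one_pos hl
    set O2 : Set (Rn n) := O ∩ {r : Rn n | 2 < pnorm n w r.2.1 (r.2.2:ℂ)} with hO2def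
    have hO2open : IsOpen O2 :=
      hOopen.inter (isOpen_lt continuous_const ((pnorm_cont n w hw0).comp continuous_snd))
    have heq : Set.EqOn (fun x => F (Ac n w l x))
        (fun x => (l:ℂ) ^ ((m:ℤ) - j) * F x) O2 := by
      intro r hr
      have hrU : r.1 ∈ U := hr.1
      have hr2 : 2 < pnorm n w r.2.1 (r.2.2:ℂ) := hr.2
      have hrne : (r.2.1, (r.2.2:ℂ)) ≠ 0 := by
        intro h0
        have hnz := pnorm_pos_ne n w hw0 (z := r.2) (by linarith)
        simp only [Prod.mk_eq_zero, Complex.ofReal_eq_zero] at h0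
        exact hnz ⟨h0.1, h0.2⟩
      have hpsi1 : ψ r.2 = 1 := hψ1 r.2 (by linarith)
      have hpsi2 : ψ (l • r.2.1, l ^ w * r.2.2) = 1 := by
        apply hψ1
        show 2 ≤ pnorm n w (l • r.2.1) ((l ^ w * r.2.2 : ℝ):ℂ)
        rw [pnorm_smul' n w hw0 l hl0.le]
        have hpn : (0:ℝ) ≤ pnorm n w r.2.1 (r.2.2:ℂ) := pnorm_nonneg' n w _ _
        nlinarith
      have hhom := hq.2.2 r.1 hrU r.2.1 (r.2.2:ℂ) (by simp) hrne l hl0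
      have hcast : ((l ^ w * r.2.2 : ℝ) : ℂ) = (l ^ w : ℝ) • (r.2.2 : ℂ) := by
        rw [Complex.real_smul]; push_cast; ring
      show F (Ac n w l r) = (l:ℂ) ^ ((m:ℤ)-j) * F r
      simp only [hF, Ac]
      have hps : ψ ((r.1, l • r.2.1, l ^ w * r.2.2) : Rn n).2 = 1 := hpsi2
      rw [hps, hpsi1, hcast, hhom]
      ring
    have hpO2 : p ∈ O2 := ⟨hpU, hp2⟩
    have hDReq := DR_congr n hO2open α β k heq hpO2
    rw [DR_comp n w l α β k F] at hDReq
    rw [DR_const_mul] at hDReq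
    have habs := congrArg (fun z : ℂ => ‖z‖) hDReq
    simp only [norm_mul, norm_pow, norm_zpow, Complex.norm_real, Real.norm_eq_abs,
      abs_of_pos hl0, abs_of_pos (pow_pos hl0 w)] at habs
    rw [pow_add, pow_mul]
    rw [hG]
    linear_combination habs
  -- bound for large pnorm
  have hbig : ∀ p : Rn n, p.1 ∈ K → 3 ≤ pnorm n w p.2.1 (p.2.2:ℂ) →
      ‖G p‖ ≤ M1 * 3 ^ |d| * (pnorm n w p.2.1 (p.2.2:ℂ)) ^ d := by
    intro p hpK hp3
    set ρ : ℝ := pnorm n w p.2.1 (p.2.2:ℂ) with hρdef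
    have hρ0 : (0:ℝ) < ρ := by linarith
    set l : ℝ := ρ / 3 with hldef
    have hl1 : (1:ℝ) ≤ l := by rw [hldef]; linarith
    have hl0 : (0:ℝ) < l := by linarith
    set p0 : Rn n := Ac n w l⁻¹ p with hp0def
    have hp01 : p0.1 = p.1 := rfl
    have hPp0 : pnorm n w p0.2.1 (p0.2.2:ℂ) = 3 := by
      show pnorm n w (l⁻¹ • p.2.1) ((l⁻¹ ^ w * p.2.2 : ℝ):ℂ) = 3
      rw [pnorm_smul' n w hw0 _ (inv_nonneg.mpr hl0.le)]
      rw [hldef]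
      field_simp
      exact hρdef.symm
    have hApp0 : Ac n w l p0 = p := by
      rw [hp0def]
      show ((p.1, l • l⁻¹ • p.2.1, l ^ w * (l⁻¹ ^ w * p.2.2)) : Rn n) = p
      rw [smul_smul, mul_inv_cancel₀ (ne_of_gt hl0), one_smul]
      rw [← mul_assoc, ← mul_pow, mul_inv_cancel₀ (ne_of_gt hl0), one_pow, one_mul]
    have hk2 := hkey l hl1 p0 (by rw [hp01]; exact hKU hpK) (by rw [hPp0]; norm_num)
    rw [hApp0] at hk2
    have hGp0 : ‖G p0‖ ≤ M1 :=
      hMbound p0 (by rw [hp01]; exact hpK) (by rw [hPp0])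
    have hlp : (0:ℝ) < l ^ ((∑ i, β i) + w * k) := by positivity
    have hld : l ^ ((m:ℤ) - j) / l ^ ((∑ i, β i) + w * k) = l ^ d := by
      rw [← zpow_natCast l ((∑ i, β i) + w * k), ← zpow_sub₀ (ne_of_gt hl0)]
      congr 1
      rw [hd]; push_cast; ring
    have habs : ‖G p‖ = l ^ d * ‖G p0‖ := by
      rw [← hld, div_mul_eq_mul_div, eq_div_iff (ne_of_gt hlp)]
      linear_combination hk2
    have hzb : l ^ d ≤ 3 ^ |d| * ρ ^ d := by
      refine aux_zpow_bound d hl1 (by rw [hldef]; linarith) (le_of_eq ?_) (by norm_num)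
      rw [hldef]; ring
    rw [habs]
    have hl_nonneg : (0:ℝ) ≤ l ^ d := le_of_lt (zpow_pos hl0 d)
    calc l ^ d * ‖G p0‖ ≤ l ^ d * M1 :=
          mul_le_mul_of_nonneg_left hGp0 hl_nonneg
      _ ≤ (3 ^ |d| * ρ ^ d) * M1 :=
          mul_le_mul_of_nonneg_right hzb hM1pos.le
      _ = M1 * 3 ^ |d| * ρ ^ d := by ring
  -- the constant
  set C1 : ℝ := M1 * 3 ^ |d| with hC1
  have hC1pos : (0:ℝ) < C1 := by
    have : (0:ℝ) < (3:ℝ) ^ |d| := zpow_pos (by norm_num) _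
    positivity
  set C : ℝ := M1 * 4 ^ |d+1| + C1 * 2 ^ |d+1| with hCdef
  have h4pos : (0:ℝ) < (4:ℝ) ^ |d+1| := zpow_pos (by norm_num) _
  have h2pos : (0:ℝ) < (2:ℝ) ^ |d+1| := zpow_pos (by norm_num) _
  have hCpos : (0:ℝ) < C := by positivity
  refine ⟨C, hCpos, ?_⟩
  intro ε hε hε1 x hxK ξ t
  have hεne : (ε:ℂ) ≠ 0 := by exact_mod_cast ne_of_gt hε
  set P : ℝ := pnorm n w ξ (t:ℂ) with hPdef
  have hP0 : (0:ℝ) ≤ P := pnorm_nonneg' n w _ _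
  set pt : Rn n := (x, ξ, t) with hptdef
  set ρ : ℝ := ε * P with hρdef
  have hρeq : pnorm n w (Ac n w ε pt).2.1 ((Ac n w ε pt).2.2 : ℂ) = ρ := by
    show pnorm n w (ε • ξ) ((ε ^ w * t : ℝ):ℂ) = ε * P
    rw [pnorm_smul' n w hw0 ε hε.le]
  -- rewrite the symbol with scaling
  have hEq : Set.EqOn
      (fun p : Rn n => ((ψ (ε • p.2.1, ε ^ w * p.2.2) : ℝ) : ℂ) * q (p.1, p.2.1, (p.2.2 : ℂ)))
      (fun p : Rn n => (ε:ℂ) ^ ((j:ℤ) - m) * F (Ac n w ε p)) O := by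
    intro r hr
    by_cases hz : r.2 = (0 : En n × ℝ)
    · have h21 : r.2.1 = (0 : En n) := by rw [hz]; rfl
      have h22 : r.2.2 = (0 : ℝ) := by rw [hz]; rfl
      have hψz : ψ (ε • r.2.1, ε ^ w * r.2.2) = 0 := by
        apply hψ0
        show pnorm n w (ε • r.2.1) ((ε ^ w * r.2.2 : ℝ):ℂ) ≤ 1
        rw [pnorm_smul' n w hw0 ε hε.le, h21, h22, pnorm_zero' n w hw0, mul_zero]
        norm_num
      show ((ψ (ε • r.2.1, ε ^ w * r.2.2) : ℝ) : ℂ) * q (r.1, r.2.1, (r.2.2 : ℂ))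
        = (ε:ℂ) ^ ((j:ℤ) - m) * F (Ac n w ε r)
      simp only [hF, Ac, hψz, Complex.ofReal_zero, zero_mul, mul_zero]
    · have hrne : (r.2.1, (r.2.2:ℂ)) ≠ 0 := by
        intro h0
        simp only [Prod.mk_eq_zero, Complex.ofReal_eq_zero] at h0
        exact hz (Prod.ext h0.1 h0.2)
      have hhom := hq.2.2 r.1 hr r.2.1 (r.2.2:ℂ) (by simp) hrne ε hε
      have hcast : ((ε ^ w * r.2.2 : ℝ) : ℂ) = (ε ^ w : ℝ) • (r.2.2 : ℂ) := by
        rw [Complex.real_smul]; push_cast; ring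
      show ((ψ (ε • r.2.1, ε ^ w * r.2.2) : ℝ) : ℂ) * q (r.1, r.2.1, (r.2.2 : ℂ))
        = (ε:ℂ) ^ ((j:ℤ) - m) * F (Ac n w ε r)
      simp only [hF, Ac]
      rw [hcast, hhom]
      have hcanc : (ε:ℂ) ^ ((j:ℤ) - m) * (ε:ℂ) ^ (m - (j:ℤ)) = 1 := by
        rw [← zpow_add₀ hεne, show (j:ℤ) - m + (m - (j:ℤ)) = 0 by ring, zpow_zero]
      calc ((ψ (ε • r.2.1, ε ^ w * r.2.2) : ℝ) : ℂ) * q (r.1, r.2.1, (r.2.2 : ℂ))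
          = ((ε:ℂ) ^ ((j:ℤ) - m) * (ε:ℂ) ^ (m - (j:ℤ)))
            * (((ψ (ε • r.2.1, ε ^ w * r.2.2) : ℝ) : ℂ) * q (r.1, r.2.1, (r.2.2 : ℂ))) := by
            rw [hcanc, one_mul]
        _ = (ε:ℂ) ^ ((j:ℤ) - m)
            * (((ψ (ε • r.2.1, ε ^ w * r.2.2) : ℝ) : ℂ)
              * ((ε:ℂ) ^ (m - (j:ℤ)) * q (r.1, r.2.1, (r.2.2 : ℂ)))) := by ring
  have hptO : pt ∈ O := hKU hxK
  have hDR := DR_congr n hOopen α β k hEq hptO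
  set A : ℝ := ‖G (Ac n w ε pt)‖ with hAdef
  have hA0 : (0:ℝ) ≤ A := norm_nonneg _
  have hval : ‖(DR n α β k
        (fun p : Rn n => ((ψ (ε • p.2.1, ε ^ w * p.2.2) : ℝ) : ℂ) * q (p.1, p.2.1, (p.2.2 : ℂ)))
        pt)‖ = ε ^ (-d) * A := by
    rw [hDR, DR_const_mul, DR_comp n w ε α β k F]
    rw [hAdef, hG]
    simp only [norm_mul, norm_pow, norm_zpow, Complex.norm_real, Real.norm_eq_abs,
      abs_of_pos hε, abs_of_pos (pow_pos hε w)]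
    rw [← pow_mul, ← zpow_natCast ε (∑ i, β i), ← zpow_natCast ε (w * k),
      ← mul_assoc, ← zpow_add₀ (ne_of_gt hε), ← zpow_add₀ (ne_of_gt hε)]
    congr 2
    rw [hd]; push_cast; ring
  rw [hval, hexp]
  -- now prove: ε ^ (-d) * A ≤ C * ε * (1 + P) ^ (d + 1)
  have h1P : (0:ℝ) < 1 + P := by linarith
  have hQpos : (0:ℝ) < (1 + P) ^ (d+1) := zpow_pos h1P _
  have hεd : (0:ℝ) < ε ^ (-d) := zpow_pos hε _
  rcases lt_or_ge ρ 1 with hρ1 | hρ1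
  · -- small: derivative vanishes
    have hAz : A = 0 := by
      rw [hAdef, hGzero (Ac n w ε pt) (by rw [hρeq]; exact hρ1)]
      exact norm_zero
    rw [hAz, mul_zero]
    positivity
  rcases le_or_gt ρ 3 with hρ3 | hρ3
  · -- middle shell
    have hAM : A ≤ M1 := by
      rw [hAdef]
      exact hMbound (Ac n w ε pt) hxK (by rw [hρeq]; exact hρ3)
    have hu1 : (1:ℝ) ≤ ε + ρ := by linarith
    have hu4 : ε + ρ ≤ 4 * 1 := by linarith
    have hzb := aux_zpow_bound (a := (1:ℝ)) (b := ε + ρ) (R := 4) (d+1)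
      le_rfl hu1 hu4 (by norm_num)
    rw [one_zpow] at hzb
    have huP : ε + ρ = ε * (1 + P) := by rw [hρdef]; ring
    have hsplit : (ε + ρ) ^ (d+1) = ε ^ (d+1) * (1 + P) ^ (d+1) := by
      rw [huP, mul_zpow]
    have hM1C : M1 ≤ C * (ε ^ (d+1) * (1 + P) ^ (d+1)) := by
      have h1 : M1 ≤ M1 * (4 ^ |d+1| * (ε + ρ) ^ (d+1)) := by
        nlinarith [hM1pos]
      have h2 : M1 * (4 ^ |d+1| * (ε + ρ) ^ (d+1)) = (M1 * 4 ^ |d+1|) * (ε + ρ) ^ (d+1) := by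
        ring
      have h3 : (M1 * 4 ^ |d+1|) * (ε + ρ) ^ (d+1) ≤ C * (ε + ρ) ^ (d+1) := by
        have hup : (0:ℝ) < (ε + ρ) ^ (d+1) := zpow_pos (by linarith) _
        have hCge : M1 * 4 ^ |d+1| ≤ C := by
          rw [hCdef]
          nlinarith [hC1pos, h2pos]
        exact mul_le_mul_of_nonneg_right hCge hup.le
      rw [← hsplit]
      linarith
    calc ε ^ (-d) * A ≤ ε ^ (-d) * M1 := mul_le_mul_of_nonneg_left hAM hεd.le
      _ ≤ ε ^ (-d) * (C * (ε ^ (d+1) * (1 + P) ^ (d+1))) :=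
          mul_le_mul_of_nonneg_left hM1C hεd.le
      _ = C * (ε ^ (-d) * ε ^ (d+1)) * (1 + P) ^ (d+1) := by ring
      _ = C * ε * (1 + P) ^ (d+1) := by
          rw [← zpow_add₀ (ne_of_gt hε), show -d + (d+1) = 1 by ring, zpow_one]
  · -- large zone
    have hAb : A ≤ C1 * ρ ^ d := by
      rw [hAdef, hC1]
      have := hbig (Ac n w ε pt) hxK (by rw [hρeq]; linarith)
      rw [hρeq] at this
      exact this
    have hPP : ρ ≤ P := by
      rw [hρdef]
      nlinarith
    have hP3 : (3:ℝ) ≤ P := by linarith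
    have hP1 : (1:ℝ) ≤ P := by linarith
    have hPpos : (0:ℝ) < P := by linarith
    have hρpos : (0:ℝ) < ρ := by linarith
    -- ε^(-d) * ρ^d = P^d
    have hsp : ε ^ (-d) * ρ ^ d = P ^ d := by
      rw [hρdef, mul_zpow, ← mul_assoc, ← zpow_add₀ (ne_of_gt hε),
        show -d + d = 0 by ring, zpow_zero, one_mul]
    -- P⁻¹ ≤ ε / 3
    have hinv : P⁻¹ ≤ ε / 3 := by
      have h3εP : (3:ℝ) ≤ ε * P := by rw [← hρdef]; linarith
      have := mul_le_mul_of_nonneg_right h3εP (inv_nonneg.mpr hPpos.le)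
      rw [mul_assoc, mul_inv_cancel₀ (ne_of_gt hPpos), mul_one] at this
      linarith
    have hPd : P ^ d = P ^ (d+1) * P⁻¹ := by
      rw [← zpow_neg_one P, ← zpow_add₀ (ne_of_gt hPpos), show d + 1 + (-1) = d by ring]
    have hzb := aux_zpow_bound (a := P) (b := 1 + P) (R := 2) (d+1)
      hP1 (by linarith) (by linarith) (by norm_num)
    -- assemble
    have hstep1 : ε ^ (-d) * A ≤ C1 * P ^ d := by
      calc ε ^ (-d) * A ≤ ε ^ (-d) * (C1 * ρ ^ d) := mul_le_mul_of_nonneg_left hAb hεd.le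
        _ = C1 * (ε ^ (-d) * ρ ^ d) := by ring
        _ = C1 * P ^ d := by rw [hsp]
    have hstep2 : C1 * P ^ d ≤ C1 * (2 ^ |d+1| * (1 + P) ^ (d+1)) * (ε / 3) := by
      rw [hPd]
      have hPd1pos : (0:ℝ) ≤ P ^ (d+1) := (zpow_pos hPpos _).le
      have h1 : P ^ (d+1) * P⁻¹ ≤ (2 ^ |d+1| * (1 + P) ^ (d+1)) * (ε / 3) := by
        have hi0 : (0:ℝ) ≤ P⁻¹ := inv_nonneg.mpr hPpos.le
        have he3 : (0:ℝ) ≤ ε / 3 := by linarith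
        exact mul_le_mul hzb hinv hi0 (by positivity)
      calc C1 * (P ^ (d+1) * P⁻¹) ≤ C1 * ((2 ^ |d+1| * (1 + P) ^ (d+1)) * (ε / 3)) :=
            mul_le_mul_of_nonneg_left h1 hC1pos.le
        _ = C1 * (2 ^ |d+1| * (1 + P) ^ (d+1)) * (ε / 3) := by ring
    have hstep3 : C1 * (2 ^ |d+1| * (1 + P) ^ (d+1)) * (ε / 3) ≤ C * ε * (1 + P) ^ (d+1) := by
      have hCge : C1 * 2 ^ |d+1| / 3 ≤ C := by
        rw [hCdef]
        nlinarith [hM1pos, h4pos, hC1pos, h2pos]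
      calc C1 * (2 ^ |d+1| * (1 + P) ^ (d+1)) * (ε / 3)
          = (C1 * 2 ^ |d+1| / 3) * ε * (1 + P) ^ (d+1) := by ring
        _ ≤ C * ε * (1 + P) ^ (d+1) := by
            apply mul_le_mul_of_nonneg_right _ hQpos.le
            exact mul_le_mul_of_nonneg_right hCge hε.le
    exact le_trans hstep1 (le_trans hstep2 hstep3)
end
end

section
/- (Mikayelyan's lemma.) Let q ∈ S^m_{‖v}(U×ℝ^{n+1}) with m ≤ −1, and for T > 0 set q^{(T)}(x,ξ,τ) = q(x,ξ,τ−iT). Then for every compact K ⊂ U, all multi-orders α, β ∈ ℕⁿ and every integer k ≥ 0 there is a constant C > 0, independent of T, such that for all T > 0: |∂_x^α ∂_ξ^β ∂_τ^k q^{(T)}(x,ξ,τ)| ≤ C·(1+T)^{−1/w}·(1+‖ξ,τ‖)^{m+1−|β|−wk} for all x ∈ K and (ξ,τ) ∈ ℝⁿ × cl C₋. -/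
noncomputable section

/-- The multi-index partial derivative `∂_x^α` in the first (space) variable. -/
def DxP (n : ℕ) (α : Fin n → ℕ) (f : Pn n → ℂ) : Pn n → ℂ :=
  (List.finRange n).foldr
    (fun i g => (pd ((EuclideanSpace.single i (1 : ℝ) : En n), (0 : En n), (0 : ℂ)))^[α i] g) f

/-- The multi-index partial derivative `∂_ξ^β` in the second (covariable) variable. -/
def DxiP (n : ℕ) (β : Fin n → ℕ) (f : Pn n → ℂ) : Pn n → ℂ :=
  (List.finRange n).foldr
    (fun i g => (pd ((0 : En n), (EuclideanSpace.single i (1 : ℝ) : En n), (0 : ℂ)))^[β i] g) f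

/-- The iterated derivative `∂_τ^k`, taken along the real direction in `τ`. -/
def DtP (n : ℕ) (k : ℕ) (f : Pn n → ℂ) : Pn n → ℂ :=
  (pd ((0 : En n), (0 : En n), (1 : ℂ)))^[k] f

/-- `∂_x^α ∂_ξ^β ∂_τ^k`. -/
def DP (n : ℕ) (α β : Fin n → ℕ) (k : ℕ) (f : Pn n → ℂ) : Pn n → ℂ :=
  DxP n α (DxiP n β (DtP n k f))

/-- The class `S^m_{‖v}(U×ℝ^{n+1})` of (non-polyhomogeneous) Volterra symbols of order
`m ∈ ℝ`: smooth on `U × ℝⁿ × cl C₋`, holomorphic in `τ ∈ C₋` for fixed `(x,ξ)`, with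
`|∂_x^α ∂_ξ^β ∂_τ^k q| ≤ C·(1+‖ξ,τ‖)^{m−|β|−wk}` locally uniformly in `x`. -/
def SymV (n w : ℕ) (U : Set (En n)) (m : ℝ) (q : Pn n → ℂ) : Prop :=
  ContDiffOn ℝ (⊤ : ℕ∞) q {p : Pn n | p.1 ∈ U ∧ p.2.2.im ≤ 0}
    ∧ (∀ x ∈ U, ∀ ξ : En n,
        DifferentiableOn ℂ (fun τ => q (x, ξ, τ)) {τ : ℂ | τ.im < 0})
    ∧ ∀ (K : Set (En n)), IsCompact K → K ⊆ U → ∀ (α β : Fin n → ℕ) (k : ℕ),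
        ∃ C > (0 : ℝ), ∀ x ∈ K, ∀ (ξ : En n) (τ : ℂ), τ.im ≤ 0 →
          ‖DP n α β k q (x, ξ, τ)‖
            ≤ C * (1 + pnorm n w ξ τ) ^ (m - (∑ i, (β i : ℝ)) - (w : ℝ) * (k : ℝ))

lemma pd_shift {V : Type*} [NormedAddCommGroup V] [NormedSpace ℝ V] (v c : V) (f : V → ℂ) :
    pd v (fun p => f (p + c)) = fun p => pd v f (p + c) := by
  funext p
  unfold pd lineDeriv
  congr 1
  funext t
  rw [add_right_comm]

lemma pd_iter_shift {V : Type*} [NormedAddCommGroup V] [NormedSpace ℝ V] (v c : V) (k : ℕ)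
    (f : V → ℂ) :
    (pd v)^[k] (fun p => f (p + c)) = fun p => (pd v)^[k] f (p + c) := by
  induction k generalizing f with
  | zero => rfl
  | succ k ih =>
    rw [Function.iterate_succ_apply, pd_shift, ih]
    simp [Function.iterate_succ_apply]

lemma foldr_shift {n : ℕ} (c : Pn n) (v : Fin n → Pn n) (γ : Fin n → ℕ)
    (l : List (Fin n)) (f : Pn n → ℂ) :
    l.foldr (fun i g => (pd (v i))^[γ i] g) (fun p => f (p + c))
      = fun p => l.foldr (fun i g => (pd (v i))^[γ i] g) f (p + c) := by
  induction l with
  | nil => rfl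
  | cons i l ih => simp only [List.foldr_cons, ih, pd_iter_shift]

lemma DP_shift {n : ℕ} (α β : Fin n → ℕ) (k : ℕ) (c : Pn n) (f : Pn n → ℂ) :
    DP n α β k (fun p => f (p + c)) = fun p => DP n α β k f (p + c) := by
  unfold DP DxP DxiP DtP
  rw [pd_iter_shift, foldr_shift, foldr_shift]

/-- Mikayelyan's lemma: if `q ∈ S^m_{‖v}(U×ℝ^{n+1})` with `m ≤ −1` and
`q^{(T)}(x,ξ,τ) = q(x,ξ,τ−iT)`, then for every compact `K ⊂ U`, `α`, `β`, `k` there is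
`C > 0`, independent of `T`, such that for all `T > 0`:
`|∂_x^α ∂_ξ^β ∂_τ^k q^{(T)}(x,ξ,τ)| ≤ C·(1+T)^{−1/w}·(1+‖ξ,τ‖)^{m+1−|β|−wk}` for `x ∈ K`
and `(ξ,τ) ∈ ℝⁿ × cl C₋`. -/
theorem stmt12 (n w : ℕ) (hn : 1 ≤ n) (hw : Even w) (hw2 : 2 ≤ w)
    (U : Set (En n)) (hU : IsOpen U) (m : ℝ) (hm : m ≤ -1)
    (q : Pn n → ℂ) (hq : SymV n w U m q)
    (K : Set (En n)) (hK : IsCompact K) (hKU : K ⊆ U)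
    (α β : Fin n → ℕ) (k : ℕ) :
    ∃ C > (0 : ℝ), ∀ T : ℝ, 0 < T → ∀ x ∈ K, ∀ (ξ : En n) (τ : ℂ), τ.im ≤ 0 →
      ‖DP n α β k (fun p => q (p.1, p.2.1, p.2.2 - Complex.I * T)) (x, ξ, τ)‖
        ≤ C * (1 + T) ^ (-(w : ℝ)⁻¹)
            * (1 + pnorm n w ξ τ) ^ (m + 1 - (∑ i, (β i : ℝ)) - (w : ℝ) * (k : ℝ)) := by
  obtain ⟨C, hC, hbd⟩ := hq.2.2 K hK hKU α β k
  refine ⟨C, hC, ?_⟩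
  intro T hT x hx ξ τ hτ
  have hw0 : w ≠ 0 := by omega
  have hwinv : (0:ℝ) ≤ (w : ℝ)⁻¹ := by positivity
  set c : Pn n := ((0 : En n), (0 : En n), -(Complex.I * T)) with hc
  set τ' : ℂ := τ - Complex.I * T with hτ'def
  have hfun : (fun p : Pn n => q (p.1, p.2.1, p.2.2 - Complex.I * T))
      = fun p => q (p + c) := by
    funext p
    congr 1
    refine Prod.ext ?_ (Prod.ext ?_ ?_) <;>
      simp [hc, sub_eq_add_neg]
  have hpt : ((x, ξ, τ) : Pn n) + c = (x, ξ, τ') := by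
    refine Prod.ext ?_ (Prod.ext ?_ ?_) <;>
      simp [hc, hτ'def, sub_eq_add_neg]
  rw [hfun, DP_shift]
  simp only [hpt]
  have hτ'im : τ'.im = τ.im - T := by
    simp [hτ'def]
  have hτ'le : τ'.im ≤ 0 := by rw [hτ'im]; linarith
  have key := hbd x hx ξ τ' hτ'le
  -- abs τ ≤ abs τ'
  have hre : τ'.re = τ.re := by simp [hτ'def]
  have habs : ‖τ‖ ≤ ‖τ'‖ := by
    have h2 : ‖τ‖ ^ 2 ≤ ‖τ'‖ ^ 2 := by
      rw [Complex.sq_norm, Complex.sq_norm, Complex.normSq_apply, Complex.normSq_apply,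
        hre, hτ'im]
      nlinarith
    exact (pow_le_pow_iff_left₀ (norm_nonneg _) (norm_nonneg _)
      two_ne_zero).mp h2
  have hTabs : T ≤ ‖τ'‖ := by
    have := Complex.abs_im_le_norm τ'
    rw [hτ'im] at this
    have : |τ.im - T| ≤ ‖τ'‖ := this
    have h3 : τ.im - T ≤ 0 := by linarith
    rw [abs_of_nonpos h3] at this
    linarith
  set P : ℝ := pnorm n w ξ τ with hP
  set P' : ℝ := pnorm n w ξ τ' with hP'
  have hbase : (0:ℝ) ≤ ‖ξ‖ ^ w + ‖τ‖ := by positivity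
  have hbase' : (0:ℝ) ≤ ‖ξ‖ ^ w + ‖τ'‖ := by positivity
  have hP0 : 0 ≤ P := Real.rpow_nonneg hbase _
  have hP'0 : 0 ≤ P' := Real.rpow_nonneg hbase' _
  have hPP' : P ≤ P' :=
    Real.rpow_le_rpow hbase (by linarith) hwinv
  have hTP' : T ^ ((w:ℝ)⁻¹) ≤ P' := by
    apply Real.rpow_le_rpow (le_of_lt hT) _ hwinv
    have : (0:ℝ) ≤ ‖ξ‖ ^ w := by positivity
    linarith
  have h1T : (0:ℝ) ≤ 1 + T := by linarith
  have hTw : ((1:ℝ) + T) ^ ((w:ℝ)⁻¹) ≤ 1 + T ^ ((w:ℝ)⁻¹) := by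
    have hp : (1:ℝ) ^ w + (T ^ ((w:ℝ)⁻¹)) ^ w ≤ (1 + T ^ ((w:ℝ)⁻¹)) ^ w :=
      pow_add_pow_le zero_le_one (Real.rpow_nonneg (le_of_lt hT) _) hw0
    rw [one_pow, Real.rpow_inv_natCast_pow (le_of_lt hT) hw0] at hp
    calc ((1:ℝ) + T) ^ ((w:ℝ)⁻¹)
        ≤ ((1 + T ^ ((w:ℝ)⁻¹)) ^ w) ^ ((w:ℝ)⁻¹) :=
          Real.rpow_le_rpow h1T hp hwinv
      _ = 1 + T ^ ((w:ℝ)⁻¹) := Real.pow_rpow_inv_natCast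
          (by positivity) hw0
  have hTw' : ((1:ℝ) + T) ^ ((w:ℝ)⁻¹) ≤ 1 + P' := by
    calc ((1:ℝ) + T) ^ ((w:ℝ)⁻¹) ≤ 1 + T ^ ((w:ℝ)⁻¹) := hTw
      _ ≤ 1 + P' := by linarith
  have h1P : (0:ℝ) < 1 + P := by linarith
  have h1P' : (0:ℝ) < 1 + P' := by linarith
  set S : ℝ := ∑ i, (β i : ℝ) with hS
  have hS0 : 0 ≤ S := Finset.sum_nonneg fun i _ => by positivity
  have hwk : (0:ℝ) ≤ (w:ℝ) * (k:ℝ) := by positivity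
  have hexp : m + 1 - S - (w:ℝ) * (k:ℝ) ≤ 0 := by linarith
  have hTwpos : (0:ℝ) < ((1:ℝ) + T) ^ ((w:ℝ)⁻¹) := Real.rpow_pos_of_pos (by linarith) _
  calc ‖DP n α β k q (x, ξ, τ')‖
      ≤ C * (1 + P') ^ (m - S - (w:ℝ) * (k:ℝ)) := key
    _ = C * ((1 + P') ^ (m + 1 - S - (w:ℝ) * (k:ℝ)) * (1 + P') ^ (-1:ℝ)) := by
        rw [show m - S - (w:ℝ) * (k:ℝ) = (m + 1 - S - (w:ℝ) * (k:ℝ)) + (-1) by ring,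
          Real.rpow_add h1P']
    _ ≤ C * ((1 + P) ^ (m + 1 - S - (w:ℝ) * (k:ℝ)) * (((1:ℝ) + T) ^ ((w:ℝ)⁻¹))⁻¹) := by
        apply mul_le_mul_of_nonneg_left _ (le_of_lt hC)
        apply mul_le_mul
        · exact Real.rpow_le_rpow_of_nonpos h1P (by linarith) hexp
        · rw [Real.rpow_neg_one]
          exact inv_anti₀ hTwpos hTw'
        · positivity
        · positivity
    _ = C * (1 + T) ^ (-(w : ℝ)⁻¹) * (1 + P) ^ (m + 1 - S - (w:ℝ) * (k:ℝ)) := by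
        rw [Real.rpow_neg h1T]
        ring
end
end

section
/- Let q ∈ S_{v,m}(U×ℝ^{n+1}) be a homogeneous Volterra symbol of degree m ∈ ℤ with m ≤ −1, and for T > 0 set q^{(T)}(x,ξ,τ) = q(x,ξ,τ−iT). Then for every compact K ⊂ U, all multi-orders α, β ∈ ℕⁿ and every integer k ≥ 0 there is a constant C > 0, independent of T, such that for every T ≥ 1: |∂_x^α ∂_ξ^β ∂_τ^k q^{(T)}(x,ξ,τ)| ≤ C·T^{−1/w}·(1+‖ξ,τ‖)^{m+1−|β|−wk} for all x ∈ K and (ξ,τ) ∈ ℝⁿ × cl C₋. -/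
noncomputable section

namespace Stmt15
open Filter Topology Set
variable {n w : ℕ} {U : Set (En n)}
def SS (n : ℕ) (U : Set (En n)) : Set (Pn n) :=
  {p : Pn n | p.1 ∈ U ∧ p.2.2.im ≤ 0 ∧ p.2 ≠ 0}
lemma isOpen_O (hU : IsOpen U) : IsOpen {p : Pn n | p.1 ∈ U ∧ p.2 ≠ 0} :=
  (hU.preimage continuous_fst).inter (isOpen_compl_singleton.preimage continuous_snd)

lemma SS_eq : SS n U = {p : Pn n | p.2.2.im ≤ 0} ∩ {p : Pn n | p.1 ∈ U ∧ p.2 ≠ 0} := by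
  ext p; simp only [SS, mem_setOf_eq, mem_inter_iff]; tauto

lemma uniqueDiffOn_SS (hU : IsOpen U) : UniqueDiffOn ℝ (SS n U) := by
  have hA : UniqueDiffOn ℝ {p : Pn n | p.2.2.im ≤ 0} := by
    apply uniqueDiffOn_convex
    · intro p hp q hq a b ha hb hab
      simp only [mem_setOf_eq] at *
      have : (a • p + b • q).2.2.im = a * p.2.2.im + b * q.2.2.im := by
        simp [Complex.add_im, Complex.smul_im]
      rw [this]
      have := mul_nonpos_of_nonneg_of_nonpos ha hp
      have := mul_nonpos_of_nonneg_of_nonpos hb hq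
      linarith
    · refine ⟨((0 : En n), (0 : En n), -Complex.I), ?_⟩
      have hopen : IsOpen {p : Pn n | p.2.2.im < 0} :=
        isOpen_lt (by fun_prop) continuous_const
      have hsub : {p : Pn n | p.2.2.im < 0} ⊆ interior {p : Pn n | p.2.2.im ≤ 0} :=
        hopen.subset_interior_iff.mpr (fun p hp => le_of_lt (Set.mem_setOf_eq ▸ hp))
      exact hsub (by simp)
  rw [SS_eq]
  intro p hp
  exact (hA p hp.1).inter ((isOpen_O hU).mem_nhds hp.2)

lemma line_mem (hU : IsOpen U) {p v : Pn n} (hp : p ∈ SS n U) (hv : v.2.2.im = 0) :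
    ∀ᶠ s : ℝ in 𝓝 0, p + s • v ∈ SS n U := by
  have hc : ContinuousAt (fun s : ℝ => p + s • v) 0 := by fun_prop
  have h0 : p + (0:ℝ) • v = p := by simp
  have hev : ∀ᶠ s : ℝ in 𝓝 0, (p + s • v) ∈ {p : Pn n | p.1 ∈ U ∧ p.2 ≠ 0} := by
    have := hc.eventually_mem ((isOpen_O hU).mem_nhds (by rw [h0]; exact ⟨hp.1, hp.2.2⟩))
    simpa using this
  filter_upwards [hev] with s hs
  refine ⟨hs.1, ?_, hs.2⟩
  have : (p + s • v).2.2.im = p.2.2.im + s * v.2.2.im := by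
    simp [Complex.add_im, Complex.smul_im]
  rw [this, hv]; simpa using hp.2.1

lemma hasDerivAt_line (hU : IsOpen U) {f : Pn n → ℂ} (hf : ContDiffOn ℝ (⊤ : ℕ∞) f (SS n U))
    {p v : Pn n} (hp : p ∈ SS n U) (hv : v.2.2.im = 0) :
    HasDerivAt (fun s : ℝ => f (p + s • v)) (pd v f p) 0 ∧
      pd v f p = fderivWithin ℝ f (SS n U) p v := by
  set D := fderivWithin ℝ f (SS n U) p with hD
  have hdiff : DifferentiableWithinAt ℝ f (SS n U) p :=
    (hf.differentiableOn (by simp)) p hp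
  have hFD : HasFDerivWithinAt f D (SS n U) p := hdiff.hasFDerivWithinAt
  have hL : HasDerivWithinAt (fun s : ℝ => p + s • v) v ((fun s : ℝ => p + s • v) ⁻¹' SS n U) 0 := by
    have : HasDerivAt (fun s : ℝ => p + s • v) v 0 := by
      simpa using ((hasDerivAt_id (0:ℝ)).smul_const v).const_add p
    exact this.hasDerivWithinAt
  have hmem : (fun s : ℝ => p + s • v) ⁻¹' SS n U ∈ 𝓝 (0:ℝ) := line_mem hU hp hv
  have hFD' : HasFDerivWithinAt f D (SS n U) ((fun s : ℝ => p + s • v) 0) := by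
    simpa using hFD
  have hg : HasDerivAt (fun s : ℝ => f (p + s • v)) (D v) 0 := by
    have := (hFD'.comp_hasDerivWithinAt 0 hL (fun s hs => hs)).hasDerivAt hmem
    simpa [Function.comp_def] using this
  have hval : pd v f p = D v := by
    have : pd v f p = deriv (fun s : ℝ => f (p + s • v)) 0 := rfl
    rw [this, hg.deriv]
  exact ⟨by rw [hval]; exact hg, hval⟩

lemma contDiffOn_pd (hU : IsOpen U) {f : Pn n → ℂ} (hf : ContDiffOn ℝ (⊤ : ℕ∞) f (SS n U))
    {v : Pn n} (hv : v.2.2.im = 0) : ContDiffOn ℝ (⊤ : ℕ∞) (pd v f) (SS n U) := by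
  have h1 : ContDiffOn ℝ (⊤ : ℕ∞) (fun p => fderivWithin ℝ f (SS n U) p v) (SS n U) :=
    (hf.fderivWithin (uniqueDiffOn_SS hU) (by exact_mod_cast le_top)).clm_apply contDiffOn_const
  exact h1.congr (fun p hp => (hasDerivAt_line hU hf hp hv).2)

def Sl (n w : ℕ) (l : ℝ) (p : Pn n) : Pn n := (p.1, l • p.2.1, (l ^ w : ℝ) • p.2.2)

lemma Sl_im (l : ℝ) (p : Pn n) : (Sl n w l p).2.2.im = l ^ w * p.2.2.im := by
  simp [Sl, Complex.smul_im]
  simp [← Complex.ofReal_pow]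

lemma Sl_mem {l : ℝ} (hl : 0 < l) {p : Pn n} (hp : p ∈ SS n U) : Sl n w l p ∈ SS n U := by
  obtain ⟨h1, h2, h3⟩ := hp
  refine ⟨h1, ?_, ?_⟩
  · rw [Sl_im]
    exact mul_nonpos_of_nonneg_of_nonpos (by positivity) h2
  · have h4 : p.2.1 ≠ 0 ∨ p.2.2 ≠ 0 := by
      by_contra hc
      push_neg at hc
      exact h3 (Prod.ext hc.1 hc.2)
    simp only [Sl, ne_eq, Prod.mk_eq_zero, smul_eq_zero, not_and_or, not_or]
    rcases h4 with h | h
    · exact Or.inl ⟨ne_of_gt hl, h⟩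
    · exact Or.inr ⟨by positivity, h⟩

def Good (n w : ℕ) (U : Set (En n)) (j : ℤ) (f : Pn n → ℂ) : Prop :=
  ContDiffOn ℝ (⊤ : ℕ∞) f (SS n U) ∧
    ∀ l : ℝ, 0 < l → ∀ p ∈ SS n U, f (Sl n w l p) = (l : ℂ) ^ j * f p

lemma Good.step (hU : IsOpen U) {j : ℤ} {f : Pn n → ℂ} (hf : Good n w U j f)
    {v : Pn n} (hv : v.2.2.im = 0) {d : ℕ}
    (hsc : ∀ l : ℝ, 0 < l → ∀ (p : Pn n) (s : ℝ),
      Sl n w l (p + s • v) = Sl n w l p + (l ^ d * s) • v) :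
    Good n w U (j - d) (pd v f) := by
  refine ⟨contDiffOn_pd hU hf.1 hv, ?_⟩
  intro l hl p hp
  have hl0 : (l : ℂ) ≠ 0 := by exact_mod_cast ne_of_gt hl
  have hSlp : Sl n w l p ∈ SS n U := Sl_mem hl hp
  have hA : HasDerivAt (fun s : ℝ => f (Sl n w l p + s • v)) (pd v f (Sl n w l p)) 0 :=
    (hasDerivAt_line hU hf.1 hSlp hv).1
  have hB : HasDerivAt (fun s : ℝ => f (p + s • v)) (pd v f p) 0 :=
    (hasDerivAt_line hU hf.1 hp hv).1
  have hmul : HasDerivAt (fun s : ℝ => l ^ d * s) (l ^ d) 0 := by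
    simpa using (hasDerivAt_id (0:ℝ)).const_mul (l ^ d)
  have hC : HasDerivAt (fun s : ℝ => f (Sl n w l p + (l ^ d * s) • v))
      ((l ^ d : ℝ) • pd v f (Sl n w l p)) 0 := by
    have h := HasDerivAt.scomp (𝕜 := ℝ) (x := (0:ℝ))
      (g₁ := fun s : ℝ => f (Sl n w l p + s • v)) (h := fun s : ℝ => l ^ d * s)
      (by simpa using hA) hmul
    simpa [Function.comp_def] using h
  have hD : HasDerivAt (fun s : ℝ => (l : ℂ) ^ j * f (p + s • v))
      ((l : ℂ) ^ j * pd v f p) 0 := hB.const_mul _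
  have heq : (fun s : ℝ => f (Sl n w l p + (l ^ d * s) • v))
      =ᶠ[𝓝 (0:ℝ)] fun s : ℝ => (l : ℂ) ^ j * f (p + s • v) := by
    filter_upwards [line_mem hU hp hv] with s hs
    rw [← hsc l hl p s, hf.2 l hl _ hs]
  have hC' : HasDerivAt (fun s : ℝ => (l : ℂ) ^ j * f (p + s • v))
      ((l ^ d : ℝ) • pd v f (Sl n w l p)) 0 := by
    exact hC.congr_of_eventuallyEq heq.symm
  have huniq : (l ^ d : ℝ) • pd v f (Sl n w l p) = (l : ℂ) ^ j * pd v f p :=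
    hC'.unique hD
  have hsm : (l ^ d : ℝ) • pd v f (Sl n w l p) = ((l : ℂ) ^ (d : ℤ)) * pd v f (Sl n w l p) := by
    rw [Complex.real_smul, zpow_natCast]
    push_cast
    ring
  rw [hsm] at huniq
  have hld : ((l : ℂ) ^ (d : ℤ)) ≠ 0 := zpow_ne_zero _ hl0
  have key : pd v f (Sl n w l p) = ((l : ℂ) ^ (d : ℤ))⁻¹ * ((l : ℂ) ^ j * pd v f p) := by
    rw [← huniq, ← mul_assoc, inv_mul_cancel₀ hld, one_mul]
  rw [key, ← mul_assoc, ← zpow_neg, ← zpow_add₀ hl0]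
  congr 1
  ring


lemma Good.iter (hU : IsOpen U) {j : ℤ} {f : Pn n → ℂ} (hf : Good n w U j f)
    {v : Pn n} (hv : v.2.2.im = 0) {d : ℕ}
    (hsc : ∀ l : ℝ, 0 < l → ∀ (p : Pn n) (s : ℝ),
      Sl n w l (p + s • v) = Sl n w l p + (l ^ d * s) • v)
    (k : ℕ) : Good n w U (j - d * k) ((pd v)^[k] f) := by
  induction k with
  | zero => simpa using hf
  | succ i ih =>
    rw [Function.iterate_succ_apply']
    have := Good.step hU ih hv hsc
    have he : j - (d : ℤ) * (i : ℤ) - (d : ℤ) = j - (d : ℤ) * ((i : ℕ) + 1 : ℕ) := by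
      push_cast; ring
    rwa [he] at this

-- the three kinds of directions
lemma hsc_x (i : Fin n) : ∀ l : ℝ, 0 < l → ∀ (p : Pn n) (s : ℝ),
    Sl n w l (p + s • ((EuclideanSpace.single i (1:ℝ) : En n), (0 : En n), (0 : ℂ)))
      = Sl n w l p + (l ^ 0 * s) • ((EuclideanSpace.single i (1:ℝ) : En n), (0 : En n), (0 : ℂ)) := by
  intro l hl p s
  simp [Sl, Prod.ext_iff, smul_add, smul_smul]

lemma hsc_xi (i : Fin n) : ∀ l : ℝ, 0 < l → ∀ (p : Pn n) (s : ℝ),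
    Sl n w l (p + s • ((0 : En n), (EuclideanSpace.single i (1:ℝ) : En n), (0 : ℂ)))
      = Sl n w l p + (l ^ 1 * s) • ((0 : En n), (EuclideanSpace.single i (1:ℝ) : En n), (0 : ℂ)) := by
  intro l hl p s
  simp [Sl, Prod.ext_iff, smul_add, smul_smul]

lemma hsc_t : ∀ l : ℝ, 0 < l → ∀ (p : Pn n) (s : ℝ),
    Sl n w l (p + s • ((0 : En n), (0 : En n), (1 : ℂ)))
      = Sl n w l p + (l ^ w * s) • ((0 : En n), (0 : En n), (1 : ℂ)) := by
  intro l hl p s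
  simp [Sl, Prod.ext_iff, smul_add, smul_smul]


lemma pd_translate (v c : Pn n) (f : Pn n → ℂ) :
    pd v (fun p => f (p + c)) = fun p => pd v f (p + c) := by
  funext p
  show deriv (fun s : ℝ => f (p + s • v + c)) 0 = deriv (fun s : ℝ => f (p + c + s • v)) 0
  congr 1
  funext s
  rw [add_right_comm]

lemma pd_iter_translate (v c : Pn n) (f : Pn n → ℂ) (k : ℕ) :
    (pd v)^[k] (fun p => f (p + c)) = fun p => (pd v)^[k] f (p + c) := by
  induction k with
  | zero => rfl
  | succ i ih =>
    rw [Function.iterate_succ_apply', Function.iterate_succ_apply', ih, pd_translate]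

lemma foldr_translate (V : Fin n → Pn n) (γ : Fin n → ℕ) (c : Pn n) (f : Pn n → ℂ) :
    ∀ L : List (Fin n),
      L.foldr (fun i g => (pd (V i))^[γ i] g) (fun p => f (p + c))
        = fun p => L.foldr (fun i g => (pd (V i))^[γ i] g) f (p + c) := by
  intro L
  induction L with
  | nil => rfl
  | cons i t ih =>
    simp only [List.foldr_cons, ih, pd_iter_translate]

lemma DP_translate (α β : Fin n → ℕ) (k : ℕ) (c : Pn n) (f : Pn n → ℂ) :
    DP n α β k (fun p => f (p + c)) = fun p => DP n α β k f (p + c) := by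
  have h1 : DtP n k (fun p => f (p + c)) = fun p => DtP n k f (p + c) :=
    pd_iter_translate _ _ _ _
  have h2 : DxiP n β (fun p => DtP n k f (p + c)) = fun p => DxiP n β (DtP n k f) (p + c) :=
    foldr_translate (fun i => ((0 : En n), EuclideanSpace.single i (1:ℝ), (0:ℂ))) β c _ _
  have h3 : DxP n α (fun p => (DxiP n β (DtP n k f)) (p + c))
      = fun p => DxP n α (DxiP n β (DtP n k f)) (p + c) :=
    foldr_translate (fun i => ((EuclideanSpace.single i (1:ℝ) : En n), (0:En n), (0:ℂ))) α c _ _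
  unfold DP
  rw [h1, h2, h3]

lemma foldr_good (hU : IsOpen U) (V : Fin n → Pn n) (γ δ : Fin n → ℕ)
    (hv : ∀ i, (V i).2.2.im = 0)
    (hsc : ∀ i, ∀ l : ℝ, 0 < l → ∀ (p : Pn n) (s : ℝ),
      Sl n w l (p + s • V i) = Sl n w l p + (l ^ (δ i) * s) • V i)
    {j : ℤ} {f : Pn n → ℂ} (hf : Good n w U j f) :
    ∀ L : List (Fin n),
      Good n w U (j - (L.map fun i => ((δ i : ℤ) * (γ i : ℤ))).sum)
        (L.foldr (fun i g => (pd (V i))^[γ i] g) f) := by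
  intro L
  induction L with
  | nil => simpa using hf
  | cons i t ih =>
    simp only [List.foldr_cons]
    have h := Good.iter hU ih (hv i) (hsc i) (γ i)
    have he : j - (t.map fun i => ((δ i : ℤ) * (γ i : ℤ))).sum - (δ i : ℤ) * (γ i : ℤ)
        = j - ((i :: t).map fun i => ((δ i : ℤ) * (γ i : ℤ))).sum := by
      simp [List.map_cons, List.sum_cons]
      ring
    rwa [he] at h


lemma pnorm_nonneg (ξ : En n) (τ : ℂ) : 0 ≤ pnorm n w ξ τ :=
  Real.rpow_nonneg (by positivity) _

lemma pnorm_smul (hw : 0 < w) {l : ℝ} (hl : 0 ≤ l) (ξ : En n) (τ : ℂ) :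
    pnorm n w (l • ξ) ((l ^ w : ℝ) • τ) = l * pnorm n w ξ τ := by
  have hw0 : (w : ℝ) ≠ 0 := Nat.cast_ne_zero.mpr hw.ne'
  unfold pnorm
  have h1 : ‖l • ξ‖ ^ w = l ^ w * ‖ξ‖ ^ w := by
    rw [norm_smul, mul_pow, Real.norm_eq_abs, abs_of_nonneg hl]
  have h2 : ‖((l ^ w : ℝ) • τ)‖ = l ^ w * ‖τ‖ := by
    rw [norm_smul, Real.norm_eq_abs, abs_of_nonneg (by positivity)]
  rw [h1, h2, ← mul_add, Real.mul_rpow (by positivity) (by positivity)]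
  congr 1
  rw [← Real.rpow_natCast l w, ← Real.rpow_mul hl, mul_inv_cancel₀ hw0, Real.rpow_one]

lemma pnorm_le_pnorm (ξ : En n) {τ τ' : ℂ} (h : ‖τ‖ ≤ ‖τ'‖) :
    pnorm n w ξ τ ≤ pnorm n w ξ τ' :=
  Real.rpow_le_rpow (by positivity) (by linarith) (by positivity)

lemma abs_le_abs_sub_iT {τ : ℂ} (hτ : τ.im ≤ 0) {T : ℝ} (hT : 0 ≤ T) :
    ‖τ‖ ≤ ‖τ - Complex.I * T‖ := by
  have hre : (τ - Complex.I * T).re = τ.re := by simp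
  have him : (τ - Complex.I * T).im = τ.im - T := by simp
  rw [Complex.norm_def, Complex.norm_def, Complex.normSq_apply, Complex.normSq_apply,
    hre, him]
  apply Real.sqrt_le_sqrt
  nlinarith

lemma T_le_abs_sub_iT {τ : ℂ} (hτ : τ.im ≤ 0) {T : ℝ} (hT : 0 ≤ T) :
    T ≤ ‖τ - Complex.I * T‖ := by
  have him : (τ - Complex.I * T).im = τ.im - T := by simp
  have h := Complex.abs_im_le_norm (τ - Complex.I * T)
  rw [him] at h
  have : |τ.im - T| = T - τ.im := by
    rw [abs_of_nonpos (by linarith)]; ring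
  rw [this] at h
  linarith


def Sig (n w : ℕ) : Set (En n × ℂ) := {y | pnorm n w y.1 y.2 = 1 ∧ y.2.im ≤ 0}

lemma pnorm_eq_one {ξ : En n} {τ : ℂ} (hw : 0 < w) (h : pnorm n w ξ τ = 1) :
    ‖ξ‖ ^ w + ‖τ‖ = 1 := by
  have hw0 : (w : ℝ) ≠ 0 := Nat.cast_ne_zero.mpr hw.ne'
  have hb : (0:ℝ) ≤ ‖ξ‖ ^ w + ‖τ‖ := by positivity
  unfold pnorm at h
  have h2 := congrArg (fun t : ℝ => t ^ (w : ℝ)) h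
  rw [← Real.rpow_mul hb, inv_mul_cancel₀ hw0, Real.rpow_one, Real.one_rpow] at h2
  exact h2

lemma isCompact_Sig (hw : 0 < w) : IsCompact (Sig n w) := by
  have hcont : Continuous fun y : En n × ℂ => pnorm n w y.1 y.2 := by
    apply Continuous.rpow_const
    · exact ((continuous_norm.comp continuous_fst).pow w).add
        (continuous_norm.comp continuous_snd)
    · intro y; right; positivity
  have hclosed : IsClosed (Sig n w) := by
    apply IsClosed.inter
    · exact isClosed_eq hcont continuous_const
    · exact isClosed_le (Complex.continuous_im.comp continuous_snd) continuous_const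
  have hbdd : Bornology.IsBounded (Sig n w) := by
    apply (Metric.isBounded_closedBall (x := (0 : En n × ℂ)) (r := 1)).subset
    intro y hy
    have h1 : ‖y.1‖ ^ w + ‖y.2‖ = 1 := pnorm_eq_one hw hy.1
    have h2 : ‖y.1‖ ≤ 1 := by
      have : ‖y.1‖ ^ w ≤ 1 := by
        have := norm_nonneg y.2; linarith
      exact pow_le_one_iff_of_nonneg (norm_nonneg _) hw.ne' |>.mp this
    have h3 : ‖y.2‖ ≤ 1 := by
      have : (0:ℝ) ≤ ‖y.1‖ ^ w := by positivity
      linarith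
    simp only [Metric.mem_closedBall, dist_zero_right]
    exact max_le h2 h3
  exact Metric.isCompact_of_isClosed_isBounded hclosed hbdd


lemma key_num {w : ℕ} (hw : 0 < w) {r T p2 : ℝ} {m' : ℤ} (hm' : m' + 1 ≤ 0)
    (hT : 1 ≤ T) (hrT : T ^ ((w:ℝ)⁻¹) ≤ r) (hr1 : 1 ≤ r) (hp : 0 ≤ p2)
    (h2 : 1 + p2 ≤ 2 * r) :
    r ^ m' ≤ T ^ (-(w:ℝ)⁻¹) * 2 ^ ((-(m'+1)).toNat) * (1 + p2) ^ (m' + 1) := by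
  have hr0 : (0:ℝ) < r := lt_of_lt_of_le one_pos hr1
  set j0 : ℕ := (-(m'+1)).toNat with hj0def
  have hj0 : m' + 1 = -(j0:ℤ) := by omega
  have hT0 : (0:ℝ) < T := lt_of_lt_of_le one_pos hT
  have hTpow : (0:ℝ) < T ^ ((w:ℝ)⁻¹) := Real.rpow_pos_of_pos hT0 _
  have h1p : (0:ℝ) < 1 + p2 := by linarith
  have e1 : r ^ m' = r⁻¹ * r ^ (m' + 1) := by
    rw [← zpow_neg_one, ← zpow_add₀ hr0.ne']
    congr 1
    ring
  have e2 : r⁻¹ ≤ T ^ (-(w:ℝ)⁻¹) := by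
    rw [Real.rpow_neg hT0.le]
    exact inv_anti₀ hTpow hrT
  have e3 : r ^ (m' + 1) ≤ 2 ^ j0 * (1 + p2) ^ (m' + 1) := by
    rw [hj0, zpow_neg, zpow_neg, zpow_natCast, zpow_natCast]
    have hpow : (1 + p2) ^ j0 ≤ (2 * r) ^ j0 := pow_le_pow_left₀ h1p.le h2 j0
    have hq1 : (0:ℝ) < (1 + p2) ^ j0 := by positivity
    calc (r ^ j0)⁻¹ = 2 ^ j0 * ((2 * r) ^ j0)⁻¹ := by
          rw [mul_pow]
          field_simp
      _ ≤ 2 ^ j0 * ((1 + p2) ^ j0)⁻¹ := by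
          apply mul_le_mul_of_nonneg_left _ (by positivity)
          exact inv_anti₀ hq1 hpow
  calc r ^ m' = r⁻¹ * r ^ (m' + 1) := e1
    _ ≤ T ^ (-(w:ℝ)⁻¹) * (2 ^ j0 * (1 + p2) ^ (m' + 1)) := by
        apply mul_le_mul e2 e3 _ (le_of_lt (Real.rpow_pos_of_pos hT0 _))
        positivity
    _ = T ^ (-(w:ℝ)⁻¹) * 2 ^ j0 * (1 + p2) ^ (m' + 1) := by ring

end Stmt15

/-- Homogeneous-symbol version of Mikayelyan's lemma: if `q ∈ S_{v,m}(U×ℝ^{n+1})` with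
`m ≤ −1` and `q^{(T)}(x,ξ,τ) = q(x,ξ,τ−iT)`, then for every compact `K ⊂ U`, `α`, `β`, `k`
there is `C > 0`, independent of `T`, such that for every `T ≥ 1`:
`|∂_x^α ∂_ξ^β ∂_τ^k q^{(T)}(x,ξ,τ)| ≤ C·T^{−1/w}·(1+‖ξ,τ‖)^{m+1−|β|−wk}` for `x ∈ K` and
`(ξ,τ) ∈ ℝⁿ × cl C₋`. -/
theorem stmt15 (n w : ℕ) (hn : 1 ≤ n) (hw : Even w) (hw2 : 2 ≤ w)
    (U : Set (En n)) (hU : IsOpen U) (m : ℤ) (hm : m ≤ -1)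
    (q : Pn n → ℂ) (hq : HomSym n w U m q)
    (K : Set (En n)) (hK : IsCompact K) (hKU : K ⊆ U)
    (α β : Fin n → ℕ) (k : ℕ) :
    ∃ C > (0 : ℝ), ∀ T : ℝ, 1 ≤ T → ∀ x ∈ K, ∀ (ξ : En n) (τ : ℂ), τ.im ≤ 0 →
      ‖(DP n α β k (fun p => q (p.1, p.2.1, p.2.2 - Complex.I * T)) (x, ξ, τ))‖
        ≤ C * T ^ (-(w : ℝ)⁻¹)
            * (1 + pnorm n w ξ τ) ^ (m + 1 - (∑ i, (β i : ℤ)) - (w : ℤ) * (k : ℤ)) := by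
  classical
  have hwpos : 0 < w := by omega
  -- `q` is Good of degree `m`
  have hGq : Stmt15.Good n w U m q := by
    refine ⟨hq.1, ?_⟩
    intro l hl p hp
    have h := hq.2.2 p.1 hp.1 p.2.1 p.2.2 hp.2.1 (by rw [Prod.mk.eta]; exact hp.2.2) l hl
    simpa [Stmt15.Sl] using h
  -- propagate Goodness through the derivatives
  have hGt : Stmt15.Good n w U (m - (w:ℤ) * (k:ℤ)) (DtP n k q) :=
    Stmt15.Good.iter hU hGq (v := ((0:En n),(0:En n),(1:ℂ))) (by simp) Stmt15.hsc_t k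
  have hGxi : Stmt15.Good n w U
      (m - (w:ℤ) * (k:ℤ) - ((List.finRange n).map fun i => ((1:ℤ) * (β i : ℤ))).sum)
      (DxiP n β (DtP n k q)) :=
    Stmt15.foldr_good hU (fun i => ((0:En n), EuclideanSpace.single i (1:ℝ), (0:ℂ))) β
      (fun _ => 1) (fun i => by simp) (fun i => Stmt15.hsc_xi i) hGt (List.finRange n)
  have hGx : Stmt15.Good n w U
      (m - (w:ℤ) * (k:ℤ) - ((List.finRange n).map fun i => ((1:ℤ) * (β i : ℤ))).sum
        - ((List.finRange n).map fun i => ((0:ℤ) * (α i : ℤ))).sum)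
      (DP n α β k q) :=
    Stmt15.foldr_good hU (fun i => ((EuclideanSpace.single i (1:ℝ) : En n), (0:En n), (0:ℂ))) α
      (fun _ => 0) (fun i => by simp) (fun i => Stmt15.hsc_x i) hGxi (List.finRange n)
  set m' : ℤ := m - (∑ i, (β i : ℤ)) - (w:ℤ) * (k:ℤ) with hm'def
  have hGD : Stmt15.Good n w U m' (DP n α β k q) := by
    have he : m - (w:ℤ) * (k:ℤ) - ((List.finRange n).map fun i => ((1:ℤ) * (β i : ℤ))).sum
        - ((List.finRange n).map fun i => ((0:ℤ) * (α i : ℤ))).sum = m' := by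
      simp only [one_mul, zero_mul]
      rw [← List.ofFn_eq_map, List.sum_ofFn]
      simp [hm'def]
      ring
    rwa [he] at hGx
  -- bound on the compact set
  have hsub : K ×ˢ Stmt15.Sig n w ⊆ Stmt15.SS n U := by
    rintro ⟨x, y⟩ ⟨hx, hy⟩
    refine ⟨hKU hx, hy.2, ?_⟩
    intro h0
    have h1 := hy.1
    simp only at h1 h0
    rw [h0] at h1
    simp only [Prod.fst_zero, Prod.snd_zero, pnorm, norm_zero, map_zero, add_zero] at h1
    rw [zero_pow hwpos.ne', Real.zero_rpow (by positivity : ((w:ℝ)⁻¹) ≠ 0)] at h1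
    exact zero_ne_one h1
  obtain ⟨M, hM⟩ := (hK.prod (Stmt15.isCompact_Sig hwpos)).exists_bound_of_continuousOn
    ((hGD.1.continuousOn).mono hsub)
  set j0 : ℕ := (-(m'+1)).toNat with hj0def
  refine ⟨(max M 1) * 2 ^ j0, by positivity, ?_⟩
  intro T hT x hx ξ τ hτ
  have hT0 : (0:ℝ) < T := lt_of_lt_of_le one_pos hT
  -- translation step
  set c : Pn n := ((0:En n), (0:En n), -(Complex.I * T)) with hcdef
  have hc : (fun p : Pn n => q (p.1, p.2.1, p.2.2 - Complex.I * T)) = fun p => q (p + c) := by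
    funext p
    congr 1
    simp [hcdef, Prod.ext_iff, sub_eq_add_neg]
  have hpt : ((x, ξ, τ) : Pn n) + c = (x, ξ, τ - Complex.I * T) := by
    simp [hcdef, Prod.ext_iff, sub_eq_add_neg]
  rw [hc, Stmt15.DP_translate]
  simp only [hpt]
  -- scaling step
  set z : ℂ := τ - Complex.I * T with hzdef
  have hzim : z.im = τ.im - T := by simp [hzdef]
  have hzim0 : z.im < 0 := by rw [hzim]; linarith
  have hz0 : z ≠ 0 := fun h => by rw [h] at hzim0; simp at hzim0
  set r : ℝ := pnorm n w ξ z with hrdef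
  have hrT : T ^ ((w:ℝ)⁻¹) ≤ r := by
    rw [hrdef, pnorm]
    apply Real.rpow_le_rpow hT0.le _ (by positivity)
    have h1 := Stmt15.T_le_abs_sub_iT hτ hT0.le
    have h2 : (0:ℝ) ≤ ‖ξ‖ ^ w := by positivity
    rw [← hzdef] at h1
    linarith
  have hr1 : (1:ℝ) ≤ r :=
    le_trans (Real.one_le_rpow hT (by positivity)) hrT
  have hr0 : (0:ℝ) < r := lt_of_lt_of_le one_pos hr1
  have h2r : 1 + pnorm n w ξ τ ≤ 2 * r := by
    have hle : pnorm n w ξ τ ≤ r := by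
      rw [hrdef]
      exact Stmt15.pnorm_le_pnorm ξ (hzdef ▸ Stmt15.abs_le_abs_sub_iT hτ hT0.le)
    linarith
  set lam : ℝ := r⁻¹ with hlamdef
  have hlam0 : 0 < lam := by positivity
  have hrl : r * lam = 1 := mul_inv_cancel₀ hr0.ne'
  set p' : Pn n := (x, lam • ξ, ((lam ^ w : ℝ) • z)) with hp'def
  have hp'S : p' ∈ Stmt15.SS n U := by
    refine ⟨hKU hx, ?_, ?_⟩
    · show ((lam ^ w : ℝ) • z).im ≤ 0
      rw [Complex.smul_im]
      exact mul_nonpos_of_nonneg_of_nonpos (by positivity) hzim0.le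
    · show ((lam • ξ, (lam ^ w : ℝ) • z) : En n × ℂ) ≠ 0
      simp only [ne_eq, Prod.mk_eq_zero, not_and_or]
      right
      exact smul_ne_zero (by positivity) hz0
  have hSl : Stmt15.Sl n w r p' = ((x, ξ, z) : Pn n) := by
    simp only [Stmt15.Sl, hp'def, smul_smul, ← mul_pow, hrl, one_pow, one_smul]
  have hhom := hGD.2 r hr0 p' hp'S
  rw [hSl] at hhom
  have hp'C : p' ∈ K ×ˢ Stmt15.Sig n w := by
    refine ⟨hx, ?_, ?_⟩
    · show pnorm n w (lam • ξ) ((lam ^ w : ℝ) • z) = 1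
      rw [Stmt15.pnorm_smul hwpos hlam0.le, ← hrdef, hlamdef, inv_mul_cancel₀ hr0.ne']
    · show ((lam ^ w : ℝ) • z).im ≤ 0
      rw [Complex.smul_im]
      exact mul_nonpos_of_nonneg_of_nonpos (by positivity) hzim0.le
  have hMp' : ‖DP n α β k q p'‖ ≤ max M 1 := by
    have := hM p' hp'C
    exact le_trans this (le_max_left _ _)
  have hm1 : m' + 1 ≤ 0 := by
    have h1 : (0:ℤ) ≤ ∑ i, (β i : ℤ) := Finset.sum_nonneg (fun i _ => Int.ofNat_nonneg _)
    have h2 : (0:ℤ) ≤ (w:ℤ) * (k:ℤ) := by positivity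
    omega
  have hnum := Stmt15.key_num hwpos hm1 hT hrT hr1 (Stmt15.pnorm_nonneg ξ τ) h2r
  rw [← hj0def] at hnum
  have habs : ‖DP n α β k q ((x, ξ, z) : Pn n)‖
      = r ^ m' * ‖DP n α β k q p'‖ := by
    rw [hhom, norm_mul, norm_zpow, Complex.norm_real, Real.norm_eq_abs, abs_of_pos hr0]
  have hexp : m + 1 - (∑ i, (β i : ℤ)) - (w:ℤ) * (k:ℤ) = m' + 1 := by
    rw [hm'def]; ring
  rw [habs, hexp]
  calc r ^ m' * ‖DP n α β k q p'‖
      ≤ r ^ m' * max M 1 := by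
        apply mul_le_mul_of_nonneg_left hMp' (zpow_nonneg hr0.le _)
    _ ≤ (T ^ (-(w:ℝ)⁻¹) * 2 ^ j0 * (1 + pnorm n w ξ τ) ^ (m' + 1)) * max M 1 := by
        apply mul_le_mul_of_nonneg_right hnum (le_trans zero_le_one (le_max_right _ _))
    _ = max M 1 * 2 ^ j0 * T ^ (-(w:ℝ)⁻¹) * (1 + pnorm n w ξ τ) ^ (m' + 1) := by ring
end
end
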